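/- arXiv:1606.01605 — 7 statements merged into one kernel-verified Lean document; each statement's English description precedes it below -/
import Mathlib

section
/- Let G be a finite cyclic group of order n and let S be a minimal zero-sum sequence of length 4 over G. Then either ind(S) = 1 or ind(S) = 2; moreover, ind(S) = 2 if and only if ||S||_g = 2 for every generator g of G. -/
open Finset

/-- The representative of `z : ZMod n` in `{1, ..., n}`. -/
def rep (n : ℕ) (z : ZMod n) : ℕ := if z = 0 then n else z.val

/-- `g` is a generator of the additive group `ZMod n`. -/
def IsAddGenerator (n : ℕ) (g : ZMod n) : Prop := AddSubgroup.zmultiples g = ⊤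

/-- `x` is a minimal zero-sum sequence of length 4 over `ZMod n`:
it is a zero-sum sequence, but no proper nontrivial subsequence of it has sum zero. -/
def IsMinZeroSum4 (n : ℕ) (x : Fin 4 → ZMod n) : Prop :=
  (∑ i, x i) = 0 ∧
    ∀ T : Finset (Fin 4), T ≠ ∅ → T ≠ Finset.univ → (∑ i ∈ T, x i) ≠ 0

/-- The `g`-norm `‖S‖_g = (y₁ + ⋯ + y₄)/n` where `S = (y₁ g)⋯(y₄ g)`, `1 ≤ yᵢ ≤ n`. -/
noncomputable def gNorm (n : ℕ) (g : ZMod n) (x : Fin 4 → ZMod n) : ℝ :=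
  (∑ i, (rep n (g⁻¹ * x i) : ℝ)) / n

/-- The index of the sequence `x`: the minimum of the `g`-norms over generators `g`. -/
noncomputable def seqIndex (n : ℕ) (x : Fin 4 → ZMod n) : ℝ :=
  sInf {r : ℝ | ∃ g : ZMod n, IsAddGenerator n g ∧ r = gNorm n g x}

section Aux

lemma isUnit_of_gen {n : ℕ} {g : ZMod n} (h : AddSubgroup.zmultiples g = ⊤) : IsUnit g := by
  have h1 : (1 : ZMod n) ∈ AddSubgroup.zmultiples g := by rw [h]; trivial
  rw [AddSubgroup.mem_zmultiples_iff] at h1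
  obtain ⟨k, hk⟩ := h1
  exact IsUnit.of_mul_eq_one (a := g) k (by rw [mul_comm, ← zsmul_eq_mul]; exact hk)

lemma neg_gen {n : ℕ} {g : ZMod n} (h : AddSubgroup.zmultiples g = ⊤) :
    AddSubgroup.zmultiples (-g) = ⊤ := by
  rw [← h]
  ext z
  simp only [AddSubgroup.mem_zmultiples_iff]
  constructor
  · rintro ⟨k, rfl⟩; exact ⟨-k, by simp⟩
  · rintro ⟨k, rfl⟩; exact ⟨-k, by simp⟩

lemma one_gen (n : ℕ) (hn : 1 < n) : AddSubgroup.zmultiples (1 : ZMod n) = ⊤ := by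
  haveI : NeZero n := ⟨by omega⟩
  rw [eq_top_iff]
  intro z _
  rw [AddSubgroup.mem_zmultiples_iff]
  refine ⟨z.val, ?_⟩
  rw [zsmul_eq_mul, mul_one]
  push_cast
  simp [ZMod.natCast_val, ZMod.cast_id]

lemma sing_ne_univ (i : Fin 4) : ({i} : Finset (Fin 4)) ≠ Finset.univ := by
  intro he
  have h1 : ({i} : Finset (Fin 4)).card = 1 := Finset.card_singleton i
  rw [he, Finset.card_univ] at h1
  simp at h1

lemma comp_ne_zero {n : ℕ} {g : ZMod n} (hg : IsUnit g)
    {x : Fin 4 → ZMod n} (hx : IsMinZeroSum4 n x) (i : Fin 4) : g⁻¹ * x i ≠ 0 := by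
  intro h
  have hxi : x i = 0 := by
    have := congrArg (g * ·) h
    simpa [← mul_assoc, ZMod.mul_inv_of_unit g hg] using this
  exact hx.2 {i} (by simp) (sing_ne_univ i) (by simp [hxi])

lemma comp_sum {n : ℕ} {g : ZMod n}
    {x : Fin 4 → ZMod n} (hx : IsMinZeroSum4 n x) : ∑ i, g⁻¹ * x i = 0 := by
  rw [← Finset.mul_sum, hx.1, mul_zero]

lemma key {n : ℕ} (hn : 1 < n) {y : Fin 4 → ZMod n}
    (h0 : ∑ i, y i = 0) (hne : ∀ i, y i ≠ 0) :
    ∑ i, rep n (y i) = 1 * n ∨ ∑ i, rep n (y i) = 2 * n ∨ ∑ i, rep n (y i) = 3 * n := by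
  haveI : NeZero n := ⟨by omega⟩
  have hrep : ∀ i, rep n (y i) = (y i).val := fun i => if_neg (hne i)
  have hdvd : n ∣ ∑ i, (y i).val := by
    rw [← ZMod.natCast_eq_zero_iff]
    push_cast
    simp only [ZMod.natCast_val, ZMod.cast_id]
    exact h0
  have hlb : ∀ i, 1 ≤ (y i).val := fun i =>
    Nat.one_le_iff_ne_zero.mpr (fun h => hne i (by rwa [← ZMod.val_eq_zero]))
  have hub : ∀ i, (y i).val ≤ n - 1 := fun i =>
    Nat.le_sub_one_of_lt (ZMod.val_lt _)
  obtain ⟨k, hk⟩ := hdvd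
  have h4 : 4 ≤ ∑ i, (y i).val := by
    calc (4 : ℕ) = ∑ _i : Fin 4, 1 := by simp
    _ ≤ _ := Finset.sum_le_sum (fun i _ => hlb i)
  have h4' : ∑ i, (y i).val + 4 ≤ 4 * n := by
    have : ∑ i, (y i).val ≤ ∑ _i : Fin 4, (n - 1) := Finset.sum_le_sum (fun i _ => hub i)
    simp [mul_comm] at this
    omega
  have hk1 : 1 ≤ k := by
    rcases Nat.eq_zero_or_pos k with h | h
    · subst h; rw [Nat.mul_zero] at hk; omega
    · exact h
  have hk3 : k ≤ 3 := by
    by_contra h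
    push_neg at h
    have h1 : n * 4 ≤ n * k := Nat.mul_le_mul_left n h
    rw [← hk] at h1
    omega
  have hks : k = 1 ∨ k = 2 ∨ k = 3 := by omega
  simp only [hrep]
  rcases hks with rfl | rfl | rfl
  · left; omega
  · right; left; omega
  · right; right; omega

lemma gNorm_eq {n : ℕ} (hn : 1 < n) {g : ZMod n} {x : Fin 4 → ZMod n} (m : ℕ)
    (hm : ∑ i, rep n (g⁻¹ * x i) = m * n) : gNorm n g x = m := by
  have hnR : (0 : ℝ) < n := by positivity
  unfold gNorm
  rw [div_eq_iff (ne_of_gt hnR), ← Nat.cast_sum, hm]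
  push_cast
  ring

lemma gNorm_cases {n : ℕ} (hn : 1 < n) {g : ZMod n} (hg : IsAddGenerator n g)
    {x : Fin 4 → ZMod n} (hx : IsMinZeroSum4 n x) :
    gNorm n g x = 1 ∨ gNorm n g x = 2 ∨ gNorm n g x = 3 := by
  have hu : IsUnit g := isUnit_of_gen hg
  rcases key hn (comp_sum hx) (comp_ne_zero hu hx) with h | h | h
  · left; simpa using gNorm_eq hn 1 h
  · right; left; simpa using gNorm_eq hn 2 h
  · right; right; simpa using gNorm_eq hn 3 h

lemma gNorm_neg {n : ℕ} (hn : 1 < n) {g : ZMod n} (hg : IsAddGenerator n g)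
    {x : Fin 4 → ZMod n} (hx : IsMinZeroSum4 n x) :
    gNorm n (-g) x = 4 - gNorm n g x := by
  haveI : NeZero n := ⟨by omega⟩
  have hu : IsUnit g := isUnit_of_gen hg
  have hne := comp_ne_zero hu hx
  have hinv : (-g)⁻¹ = -(g⁻¹) := by
    have hu' : IsUnit (-g) := hu.neg
    have h1 : (-g)⁻¹ * (-g) = 1 := ZMod.inv_mul_of_unit _ hu'
    have h2 : (-(g⁻¹)) * (-g) = 1 := by
      rw [neg_mul_neg]; exact ZMod.inv_mul_of_unit _ hu
    exact hu'.mul_right_cancel (h1.trans h2.symm)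
  have hrep : ∀ i : Fin 4, (rep n ((-g)⁻¹ * x i) : ℝ) = n - rep n (g⁻¹ * x i) := by
    intro i
    have hy := hne i
    have he : (-g)⁻¹ * x i = -(g⁻¹ * x i) := by rw [hinv, neg_mul]
    rw [he, rep, rep, if_neg (neg_ne_zero.mpr hy), if_neg hy]
    haveI : NeZero (g⁻¹ * x i) := ⟨hy⟩
    rw [ZMod.val_neg_of_ne_zero]
    have hlt := ZMod.val_lt (g⁻¹ * x i)
    push_cast [Nat.cast_sub (le_of_lt hlt)]
    ring
  have hnR : (0 : ℝ) < n := by positivity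
  unfold gNorm
  rw [Finset.sum_congr rfl (fun i _ => hrep i), Finset.sum_sub_distrib,
    Finset.sum_const]
  simp only [Finset.card_univ, Fintype.card_fin, nsmul_eq_mul]
  field_simp
  push_cast
  ring

end Aux

/-- For a minimal zero-sum sequence `S` of length 4 over a cyclic group of order `n`,
either `ind(S) = 1` or `ind(S) = 2`; moreover `ind(S) = 2` iff `‖S‖_g = 2` for
every generator `g`. -/
theorem index_one_or_two (n : ℕ) (hn : 0 < n) (x : Fin 4 → ZMod n)
    (hx : IsMinZeroSum4 n x) :
    (seqIndex n x = 1 ∨ seqIndex n x = 2) ∧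
      (seqIndex n x = 2 ↔ ∀ g : ZMod n, IsAddGenerator n g → gNorm n g x = 2) := by
  have hn2 : 1 < n := by
    by_contra h
    push_neg at h
    interval_cases n
    exact hx.2 {0} (by simp) (sing_ne_univ 0) (Subsingleton.elim _ _)
  have hgen1 : IsAddGenerator n 1 := one_gen n hn2
  have h1A : ∀ r ∈ {r : ℝ | ∃ g : ZMod n, IsAddGenerator n g ∧ r = gNorm n g x}, (1:ℝ) ≤ r := by
    rintro r ⟨g, hg, rfl⟩
    rcases gNorm_cases hn2 hg hx with h | h | h <;> rw [h] <;> norm_num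
  by_cases hall : ∀ g : ZMod n, IsAddGenerator n g → gNorm n g x = 2
  · have hidx : seqIndex n x = 2 := by
      unfold seqIndex
      have hset : {r : ℝ | ∃ g : ZMod n, IsAddGenerator n g ∧ r = gNorm n g x} = {2} := by
        ext r
        simp only [Set.mem_setOf_eq, Set.mem_singleton_iff]
        constructor
        · rintro ⟨g, hg, rfl⟩; exact hall g hg
        · rintro rfl; exact ⟨1, hgen1, (hall 1 hgen1).symm⟩
      rw [hset, csInf_singleton]
    refine ⟨Or.inr hidx, ?_⟩
    exact ⟨fun _ => hall, fun _ => hidx⟩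
  · push_neg at hall
    obtain ⟨g, hg, hne2⟩ := hall
    have hg1 : ∃ g0 : ZMod n, IsAddGenerator n g0 ∧ gNorm n g0 x = 1 := by
      rcases gNorm_cases hn2 hg hx with h | h | h
      · exact ⟨g, hg, h⟩
      · exact absurd h hne2
      · exact ⟨-g, neg_gen hg, by rw [gNorm_neg hn2 hg hx, h]; norm_num⟩
    obtain ⟨g0, hg0, h0⟩ := hg1
    have hidx : seqIndex n x = 1 := by
      unfold seqIndex
      exact IsLeast.csInf_eq ⟨⟨g0, hg0, h0.symm⟩, h1A⟩
    refine ⟨Or.inl hidx, ?_⟩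
    constructor
    · intro h; rw [hidx] at h; norm_num at h
    · intro h; exact absurd (h g hg) hne2
end

section
/- Let n be a positive integer and let S = (x_1)(x_2)(x_3)(x_4) be a minimal zero-sum sequence over Z/n with ind(S) = 2. Suppose d = gcd(n, x_1, x_2, x_3, x_4) > 1, and let m = n/d. Then S' = (x_1/d)(x_2/d)(x_3/d)(x_4/d) is a minimal zero-sum sequence over Z/m with ind(S') = 2. -/
open Finset

lemma rep_cast {n : ℕ} [NeZero n] (z : ZMod n) : ((rep n z : ℕ) : ZMod n) = z := by
  unfold rep
  split
  · simp [*]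
  · exact ZMod.natCast_zmod_val z

lemma rep_pos {n : ℕ} [NeZero n] (z : ZMod n) : 1 ≤ rep n z := by
  unfold rep
  split
  · exact Nat.one_le_iff_ne_zero.mpr (NeZero.ne n)
  · exact Nat.one_le_iff_ne_zero.mpr (fun h => ‹¬ z = 0› ((ZMod.val_eq_zero z).mp h))

lemma rep_le {n : ℕ} [NeZero n] (z : ZMod n) : rep n z ≤ n := by
  unfold rep
  split
  · exact le_rfl
  · exact (ZMod.val_lt z).le

lemma rep_natCast {n : ℕ} [NeZero n] {s : ℕ} (h1 : 1 ≤ s) (h2 : s ≤ n) :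
    rep n ((s : ℕ) : ZMod n) = s := by
  unfold rep
  split
  · rename_i h
    have hdvd : n ∣ s := (ZMod.natCast_eq_zero_iff s n).mp h
    exact Nat.le_antisymm (Nat.le_of_dvd h1 hdvd) h2
  · rename_i h
    have hlt : s < n := by
      rcases lt_or_eq_of_le h2 with h' | h'
      · exact h'
      · exact absurd (by simp [h']) h
    exact ZMod.val_cast_of_lt hlt

lemma isAddGenerator_iff {n : ℕ} [NeZero n] (g : ZMod n) :
    IsAddGenerator n g ↔ ∃ c : ZMod n, c * g = 1 := by
  constructor
  · intro h
    have h1 : (1 : ZMod n) ∈ AddSubgroup.zmultiples g := by rw [h]; trivial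
    obtain ⟨k, hk⟩ := AddSubgroup.mem_zmultiples_iff.mp h1
    exact ⟨(k : ZMod n), by rw [← hk, zsmul_eq_mul]⟩
  · rintro ⟨c, hc⟩
    rw [IsAddGenerator, eq_top_iff]
    intro a _
    rw [AddSubgroup.mem_zmultiples_iff]
    refine ⟨(((a * c).val : ℕ) : ℤ), ?_⟩
    rw [zsmul_eq_mul]
    push_cast
    rw [ZMod.natCast_zmod_val, mul_assoc, hc, mul_one]

lemma inv_eq_of_mul {n : ℕ} {c g : ZMod n} (h : c * g = 1) : g⁻¹ = c := by
  have hu : IsUnit g := IsUnit.of_mul_eq_one (a := g) c (by rw [mul_comm]; exact h)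
  calc g⁻¹ = 1 * g⁻¹ := (one_mul _).symm
    _ = (c * g) * g⁻¹ := by rw [h]
    _ = c * (g * g⁻¹) := by rw [mul_assoc]
    _ = c := by rw [ZMod.mul_inv_of_unit g hu, mul_one]

lemma modeq_cancel {d m a b : ℕ} (hd : 0 < d) (h : d * a ≡ d * b [MOD d * m]) :
    a ≡ b [MOD m] := by
  unfold Nat.ModEq at h ⊢
  rw [Nat.mul_mod_mul_left, Nat.mul_mod_mul_left] at h
  exact Nat.eq_of_mul_eq_mul_left hd h

lemma norm_transfer (n d m : ℕ) [NeZero n] [NeZero m] (hnm : n = d * m) (hd0 : 0 < d)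
    (x : Fin 4 → ZMod n) (hdr : ∀ i, d ∣ rep n (x i))
    (u c : ZMod n) (hc : c * u = 1) :
    (∃ c' : ZMod m, c' * ((u.val : ℕ) : ZMod m) = 1) ∧
      gNorm m ((u.val : ℕ) : ZMod m) (fun i => ((rep n (x i) / d : ℕ) : ZMod m))
        = gNorm n u x := by
  have hmn : m ∣ n := ⟨d, by rw [hnm, mul_comm]⟩
  have hdn : d ∣ n := ⟨m, hnm⟩
  have hcu : c.val * u.val ≡ 1 [MOD n] := by
    rw [← ZMod.natCast_eq_natCast_iff]
    push_cast
    rw [ZMod.natCast_zmod_val, ZMod.natCast_zmod_val]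
    exact hc
  have hcum : ((c.val : ℕ) : ZMod m) * ((u.val : ℕ) : ZMod m) = 1 := by
    have := (ZMod.natCast_eq_natCast_iff _ _ _).mpr (hcu.of_dvd hmn)
    push_cast at this
    exact this
  have hu : IsUnit ((u.val : ℕ) : ZMod m) :=
    IsUnit.of_mul_eq_one _ (by rw [mul_comm]; exact hcum)
  -- per-index facts
  have key : ∀ i, d ∣ rep n (u⁻¹ * x i) ∧
      rep m (((u.val : ℕ) : ZMod m)⁻¹ * ((rep n (x i) / d : ℕ) : ZMod m))
        = rep n (u⁻¹ * x i) / d := by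
    intro i
    set t := rep n (u⁻¹ * x i) with ht
    have hinv : u⁻¹ = c := inv_eq_of_mul hc
    have hmod : u.val * t ≡ rep n (x i) [MOD n] := by
      rw [← ZMod.natCast_eq_natCast_iff]
      push_cast
      rw [ZMod.natCast_zmod_val, rep_cast, rep_cast, hinv, ← mul_assoc,
        mul_comm u c, hc, one_mul]
    have h2 : u.val * t ≡ 0 [MOD d] :=
      (hmod.of_dvd hdn).trans (Nat.modEq_zero_iff_dvd.mpr (hdr i))
    have h3 : t ≡ 0 [MOD d] := by
      calc t = 1 * t := (one_mul t).symm
      _ ≡ (c.val * u.val) * t [MOD d] := ((hcu.of_dvd hdn).symm.mul_right t)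
      _ = c.val * (u.val * t) := by ring
      _ ≡ c.val * 0 [MOD d] := h2.mul_left _
      _ = 0 := by ring
    have hdt : d ∣ t := Nat.modEq_zero_iff_dvd.mp h3
    refine ⟨hdt, ?_⟩
    have h4 : u.val * (t / d) ≡ rep n (x i) / d [MOD m] := by
      apply modeq_cancel hd0
      have e1 : d * (u.val * (t / d)) = u.val * t := by
        rw [mul_comm d, mul_assoc, Nat.div_mul_cancel hdt]
      have e2 : d * (rep n (x i) / d) = rep n (x i) := Nat.mul_div_cancel' (hdr i)
      rw [e1, e2, ← hnm]
      exact hmod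
    have hcast : ((u.val : ℕ) : ZMod m) * ((t / d : ℕ) : ZMod m)
        = ((rep n (x i) / d : ℕ) : ZMod m) := by
      have := (ZMod.natCast_eq_natCast_iff _ _ _).mpr h4
      push_cast at this
      exact this
    have heq : ((u.val : ℕ) : ZMod m)⁻¹ * ((rep n (x i) / d : ℕ) : ZMod m)
        = ((t / d : ℕ) : ZMod m) := by
      rw [← hcast, ← mul_assoc, ZMod.inv_mul_of_unit _ hu, one_mul]
    rw [heq]
    refine rep_natCast ?_ ?_
    · rw [Nat.one_le_div_iff hd0]
      exact Nat.le_of_dvd (rep_pos _) hdt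
    · calc t / d ≤ n / d := Nat.div_le_div_right (rep_le _)
      _ = m := by rw [hnm, Nat.mul_div_cancel_left m hd0]
  constructor
  · exact ⟨_, hcum⟩
  · unfold gNorm
    have hrw : ∀ i : Fin 4,
        (rep m (((u.val : ℕ) : ZMod m)⁻¹ * ((rep n (x i) / d : ℕ) : ZMod m)) : ℝ)
          = (rep n (u⁻¹ * x i) : ℝ) / d := by
      intro i
      rw [(key i).2]
      rw [eq_div_iff (show (d:ℝ) ≠ 0 by exact_mod_cast hd0.ne')]
      exact_mod_cast Nat.div_mul_cancel (key i).1
    simp only [hrw]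
    rw [← Finset.sum_div, div_div]
    congr 1
    rw [hnm]
    push_cast
    ring

/-- If `S = (x₁)(x₂)(x₃)(x₄)` is a minimal zero-sum sequence over `ZMod n` with
`ind(S) = 2` and `d = gcd(n, x₁, x₂, x₃, x₄) > 1`, then with `m = n/d` the sequence
`S' = (x₁/d)(x₂/d)(x₃/d)(x₄/d)` over `ZMod m` is a minimal zero-sum sequence
with `ind(S') = 2`. -/
theorem descend_counterexample (n : ℕ) (hn : 0 < n) (x : Fin 4 → ZMod n)
    (hx : IsMinZeroSum4 n x) (hind : seqIndex n x = 2) (d : ℕ)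
    (hd : d = Nat.gcd (Nat.gcd (Nat.gcd (Nat.gcd n (rep n (x 0))) (rep n (x 1)))
      (rep n (x 2))) (rep n (x 3)))
    (hd1 : 1 < d) (m : ℕ) (hm : m = n / d) :
    IsMinZeroSum4 m (fun i => ((rep n (x i) / d : ℕ) : ZMod m)) ∧
      seqIndex m (fun i => ((rep n (x i) / d : ℕ) : ZMod m)) = 2 := by
  haveI : NeZero n := ⟨hn.ne'⟩
  have hd0 : 0 < d := lt_trans one_pos hd1
  have hdn : d ∣ n := by
    rw [hd]
    exact dvd_trans (Nat.gcd_dvd_left _ _) (dvd_trans (Nat.gcd_dvd_left _ _)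
      (dvd_trans (Nat.gcd_dvd_left _ _) (Nat.gcd_dvd_left _ _)))
  have hdr : ∀ i : Fin 4, d ∣ rep n (x i) := by
    intro i
    fin_cases i
    · rw [hd]
      exact dvd_trans (Nat.gcd_dvd_left _ _) (dvd_trans (Nat.gcd_dvd_left _ _)
        (dvd_trans (Nat.gcd_dvd_left _ _) (Nat.gcd_dvd_right _ _)))
    · rw [hd]
      exact dvd_trans (Nat.gcd_dvd_left _ _) (dvd_trans (Nat.gcd_dvd_left _ _)
        (Nat.gcd_dvd_right _ _))
    · rw [hd]
      exact dvd_trans (Nat.gcd_dvd_left _ _) (Nat.gcd_dvd_right _ _)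
    · rw [hd]
      exact Nat.gcd_dvd_right _ _
  have hnm : n = d * m := by rw [hm, Nat.mul_div_cancel' hdn]
  have hm0 : 0 < m := by
    rcases Nat.eq_zero_or_pos m with h | h
    · exfalso; rw [h, mul_zero] at hnm; exact hn.ne' hnm
    · exact h
  haveI : NeZero m := ⟨hm0.ne'⟩
  -- sum correspondence
  have hiff : ∀ T : Finset (Fin 4),
      ((∑ i ∈ T, x i) = 0 ↔ (∑ i ∈ T, ((rep n (x i) / d : ℕ) : ZMod m)) = 0) := by
    intro T
    have e1 : (∑ i ∈ T, x i) = ((∑ i ∈ T, rep n (x i) : ℕ) : ZMod n) := by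
      push_cast
      exact (Finset.sum_congr rfl fun i _ => (rep_cast (x i)).symm)
    have e2 : (∑ i ∈ T, ((rep n (x i) / d : ℕ) : ZMod m))
        = ((∑ i ∈ T, rep n (x i) / d : ℕ) : ZMod m) := by push_cast; rfl
    rw [e1, e2, ZMod.natCast_eq_zero_iff, ZMod.natCast_eq_zero_iff]
    have e3 : ∑ i ∈ T, rep n (x i) = d * ∑ i ∈ T, rep n (x i) / d := by
      rw [Finset.mul_sum]
      exact Finset.sum_congr rfl fun i _ => (Nat.mul_div_cancel' (hdr i)).symm
    rw [e3]
    generalize (∑ i ∈ T, rep n (x i) / d) = S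
    rw [hnm, Nat.mul_dvd_mul_iff_left hd0]
  constructor
  · exact ⟨(hiff Finset.univ).mp hx.1,
      fun T h1 h2 h0 => hx.2 T h1 h2 ((hiff T).mpr h0)⟩
  · -- index
    have hmn : m ∣ n := ⟨d, by rw [hnm, mul_comm]⟩
    have hset : {r : ℝ | ∃ g : ZMod m, IsAddGenerator m g ∧
          r = gNorm m g (fun i => ((rep n (x i) / d : ℕ) : ZMod m))}
        = {r : ℝ | ∃ g : ZMod n, IsAddGenerator n g ∧ r = gNorm n g x} := by
      ext r
      simp only [Set.mem_setOf_eq]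
      constructor
      · rintro ⟨h, hgen, rfl⟩
        obtain ⟨c', hc'⟩ := (isAddGenerator_iff h).mp hgen
        have hu : IsUnit h := IsUnit.of_mul_eq_one (a := h) c' (by rw [mul_comm]; exact hc')
        obtain ⟨U, hU⟩ := ZMod.unitsMap_surjective hmn hu.unit
        set u : ZMod n := (U : ZMod n) with hudef
        have hgenu : IsAddGenerator n u := by
          rw [isAddGenerator_iff]
          exact ⟨((U⁻¹ : (ZMod n)ˣ) : ZMod n), by
            rw [← Units.val_mul, inv_mul_cancel, Units.val_one]⟩
        have hval : ((u.val : ℕ) : ZMod m) = h := by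
          have h1 : (ZMod.unitsMap hmn U : ZMod m) = h := by rw [hU, IsUnit.unit_spec]
          rw [ZMod.unitsMap_def] at h1
          rw [Units.coe_map] at h1
          simp only [RingHom.toMonoidHom_eq_coe, MonoidHom.coe_coe] at h1
          calc ((u.val : ℕ) : ZMod m)
              = ZMod.castHom hmn (ZMod m) ((u.val : ℕ) : ZMod n) :=
                (map_natCast (ZMod.castHom hmn (ZMod m)) u.val).symm
            _ = ZMod.castHom hmn (ZMod m) u := by rw [ZMod.natCast_zmod_val]
            _ = h := h1
        obtain ⟨c, hc⟩ := (isAddGenerator_iff u).mp hgenu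
        have := (norm_transfer n d m hnm hd0 x hdr u c hc).2
        rw [hval] at this
        exact ⟨u, hgenu, this⟩
      · rintro ⟨u, hgen, rfl⟩
        obtain ⟨c, hc⟩ := (isAddGenerator_iff u).mp hgen
        obtain ⟨⟨c', hc'⟩, hnorm⟩ := norm_transfer n d m hnm hd0 x hdr u c hc
        exact ⟨((u.val : ℕ) : ZMod m), (isAddGenerator_iff _).mpr ⟨c', hc'⟩, hnorm.symm⟩
    unfold seqIndex
    rw [hset]
    unfold seqIndex at hind
    exact hind
end

section
/- Let n be a positive integer with gcd(n, 6) = 1 and let S = (x_1)(x_2)(x_3)(x_4) be a minimal zero-sum sequence over Z/n with ind(S) = 2. If gcd(n, x_i) = 1 for all i ∈ {1, 2, 3, 4}, then for every permutation σ of {1, 2, 3, 4} one has t(x̄_{σ(1)} x_{σ(2)}, n) = t(x̄_{σ(3)} x_{σ(4)}, n), where x̄ denotes the inverse of x in the multiplicative group (Z/n)^*. -/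
open Finset

/-- The classical Dedekind sum `s(h, k) = ∑_{r=1}^{k} (r/k)(hr/k − ⌊hr/k⌋ − 1/2)`. -/
def dedekindS (h : ℤ) (k : ℕ) : ℚ :=
  ∑ r ∈ Finset.Icc 1 k,
    (r : ℚ) / k * ((h : ℚ) * r / k - ⌊(h : ℚ) * r / k⌋ - 1 / 2)

/-- The Dedekind-type sum `t(h, k) = ∑_{1 ≤ r ≤ k, gcd(r,k)=1} (r/k)(hr/k − ⌊hr/k⌋ − 1/2)`. -/
def dedekindT (h : ℤ) (k : ℕ) : ℚ :=
  ∑ r ∈ (Finset.Icc 1 k).filter (fun r => Nat.gcd r k = 1),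
    (r : ℚ) / k * ((h : ℚ) * r / k - ⌊(h : ℚ) * r / k⌋ - 1 / 2)

/- ----------------- auxiliary lemmas ----------------- -/

lemma isAddGenerator_unit (n : ℕ) [NeZero n] (w : (ZMod n)ˣ) : IsAddGenerator n ↑w := by
  unfold IsAddGenerator
  ext z
  simp only [AddSubgroup.mem_top, iff_true, AddSubgroup.mem_zmultiples_iff]
  refine ⟨((z * ↑w⁻¹).val : ℤ), ?_⟩
  have h1 : (((z * ↑w⁻¹).val : ℤ) : ZMod n) = z * ↑w⁻¹ := by
    push_cast
    exact ZMod.natCast_rightInverse _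
  rw [zsmul_eq_mul, h1, mul_assoc, ← Units.val_mul, inv_mul_cancel]
  simp

lemma dedekindT_eq_sum_units (n : ℕ) [NeZero n] (hn : 2 ≤ n) (w : (ZMod n)ˣ) :
    dedekindT ((w : ZMod n).val : ℤ) n =
      ∑ u : (ZMod n)ˣ, ((u : ZMod n).val : ℚ) / n *
        ((((w * u : (ZMod n)ˣ) : ZMod n).val : ℚ) / n - 1/2) := by
  haveI : Fact (1 < n) := ⟨hn⟩
  unfold dedekindT
  refine (Finset.sum_bij (fun (u : (ZMod n)ˣ) (_ : u ∈ Finset.univ) => (u : ZMod n).val)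
    ?_ ?_ ?_ ?_).symm
  · intro u _
    simp only [Finset.mem_filter, Finset.mem_Icc]
    refine ⟨⟨?_, le_of_lt (ZMod.val_lt _)⟩, ZMod.val_coe_unit_coprime u⟩
    rcases Nat.eq_zero_or_pos (u : ZMod n).val with h | h
    · exfalso
      have : (u : ZMod n) = 0 := by
        have := ZMod.natCast_rightInverse (n := n) (u : ZMod n)
        rw [← this, h]; simp
      have h1 : (1 : ZMod n) = 0 := by
        calc (1 : ZMod n) = ↑u * ↑u⁻¹ := by rw [← Units.val_mul, mul_inv_cancel]; simp
        _ = 0 := by rw [this, zero_mul]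
      exact one_ne_zero (α := ZMod n) h1
    · exact h
  · intro u _ v _ h
    ext
    exact ZMod.val_injective n h
  · intro r hr
    simp only [Finset.mem_filter, Finset.mem_Icc] at hr
    have hrn : r < n := by
      rcases lt_or_eq_of_le hr.1.2 with h | h
      · exact h
      · exfalso; rw [h] at hr; rw [Nat.gcd_self] at hr; omega
    refine ⟨ZMod.unitOfCoprime r hr.2, Finset.mem_univ _, ?_⟩
    show ((ZMod.unitOfCoprime r hr.2 : (ZMod n)ˣ) : ZMod n).val = r
    rw [show ((ZMod.unitOfCoprime r hr.2 : (ZMod n)ˣ) : ZMod n) = (r : ZMod n) from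
      ZMod.coe_unitOfCoprime r hr.2]
    rw [ZMod.val_natCast, Nat.mod_eq_of_lt hrn]
  · intro u _
    set h : ℤ := ((w : ZMod n).val : ℤ)
    set r : ℕ := (u : ZMod n).val
    have key : (h : ℚ) * r / n - ⌊(h : ℚ) * r / n⌋ =
        (((w * u : (ZMod n)ˣ) : ZMod n).val : ℚ) / n := by
      have h1 : (h : ℚ) * r / n = ((h * r : ℤ) : ℚ) / (n : ℕ) := by push_cast; ring
      rw [h1, Rat.floor_intCast_div_natCast]
      have h2 : (((h * r : ℤ) : ZMod n)).val = ((w * u : (ZMod n)ˣ) : ZMod n).val := by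
        congr 1
        push_cast
        have e1 : (((((w : ZMod n).val : ℕ) : ℤ)) : ZMod n) = (w : ZMod n) := by
          rw [Int.cast_natCast]; exact ZMod.natCast_rightInverse _
        have e2 : (((((u : ZMod n).val : ℕ) : ℤ)) : ZMod n) = (u : ZMod n) := by
          rw [Int.cast_natCast]; exact ZMod.natCast_rightInverse _
        rw [show ((h : ℤ) : ZMod n) = ((((w : ZMod n).val : ℕ) : ℤ) : ZMod n) from rfl, e1]
        rw [show ((r : ℕ) : ZMod n) = (((u : ZMod n).val : ℕ) : ZMod n) from rfl]
        rw [show ((((u : ZMod n).val : ℕ)) : ZMod n) = (u : ZMod n) from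
          ZMod.natCast_rightInverse _]
      have h3 : ((((h * r : ℤ) : ZMod n)).val : ℤ) = (h * r) % n := ZMod.val_intCast _
      rw [← h2]
      have h4 : ((((h * r : ℤ) : ZMod n)).val : ℚ) = (((h * r) % n : ℤ) : ℚ) := by
        exact_mod_cast congrArg (Int.cast : ℤ → ℚ) h3
      rw [h4, Int.emod_def]
      have hn0 : (n : ℚ) ≠ 0 := by positivity
      push_cast
      field_simp
    rw [key]

/-- Pure algebra: if `fA + fB + fC + fD = 0` pointwise, the sums of squares of each of
them agree with that of `g`, and the plain sums of `fB`, `fD` agree with that of `g`,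
then the two "Dedekind-type" sums agree. -/
lemma sum_pair_eq {α : Type*} [Fintype α] (fA fB fC fD g : α → ℚ)
    (hA : ∑ u, (fA u)^2 = ∑ u, (g u)^2) (hB : ∑ u, (fB u)^2 = ∑ u, (g u)^2)
    (hC : ∑ u, (fC u)^2 = ∑ u, (g u)^2) (hD : ∑ u, (fD u)^2 = ∑ u, (g u)^2)
    (hB1 : ∑ u, fB u = ∑ u, g u) (hD1 : ∑ u, fD u = ∑ u, g u)
    (hpt : ∀ u, fA u + fB u + fC u + fD u = 0) :
    ∑ u, (fA u + 1/2) * fB u = ∑ u, (fC u + 1/2) * fD u := by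
  have e : ∑ u, ((fA u + 1/2) * fB u - (fC u + 1/2) * fD u) = 0 := by
    have h1 : ∀ u, (fA u + 1/2) * fB u - (fC u + 1/2) * fD u =
        (1/2) * (fC u)^2 + (1/2) * (fD u)^2 - (1/2) * (fA u)^2 - (1/2) * (fB u)^2
          + (1/2) * fB u - (1/2) * fD u := by
      intro u
      linear_combination ((fA u + fB u - fC u - fD u)/2) * hpt u
    rw [Finset.sum_congr rfl fun u _ => h1 u]
    simp only [Finset.sum_sub_distrib, Finset.sum_add_distrib, ← Finset.mul_sum]
    rw [hA, hB, hC, hD, hB1, hD1]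
    ring
  rw [Finset.sum_sub_distrib] at e
  linarith

/-- If `gcd(n,6) = 1` and `S = (x₁)(x₂)(x₃)(x₄)` is a minimal zero-sum sequence over
`ZMod n` with `ind(S) = 2` and `gcd(n, xᵢ) = 1` for all `i`, then
`t(x̄_{σ(1)} x_{σ(2)}, n) = t(x̄_{σ(3)} x_{σ(4)}, n)` for every permutation `σ` of the
four indices, where `x̄` is the inverse of `x` in `(ZMod n)ˣ`. -/
theorem dedekindT_eq_of_index_two (n : ℕ) (hn : 0 < n) (h6 : Nat.gcd n 6 = 1)
    (x : Fin 4 → ZMod n) (hx : IsMinZeroSum4 n x) (hind : seqIndex n x = 2)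
    (hcop : ∀ i, Nat.gcd n (rep n (x i)) = 1) :
    ∀ σ : Equiv.Perm (Fin 4),
      dedekindT (((x (σ 0))⁻¹ * x (σ 1)).val : ℤ) n =
        dedekindT (((x (σ 2))⁻¹ * x (σ 3)).val : ℤ) n := by
  intro σ
  haveI : NeZero n := ⟨hn.ne'⟩
  -- basic nondegeneracy
  have hx0 : ∀ i, x i ≠ 0 := by
    intro i h0
    refine hx.2 {i} (by simp) ?_ (by rw [Finset.sum_singleton]; exact h0)
    intro h
    have := congrArg Finset.card h
    simp at this
  have hn2 : 2 ≤ n := by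
    by_contra h
    push_neg at h
    interval_cases n
    exact hx0 0 (Subsingleton.elim _ _)
  haveI : Fact (1 < n) := ⟨hn2⟩
  -- the xᵢ are units
  have hXu : ∀ i, ∃ u : (ZMod n)ˣ, (u : ZMod n) = x i := by
    intro i
    have h := hcop i
    rw [rep, if_neg (hx0 i)] at h
    refine ⟨ZMod.unitOfCoprime (x i).val (Nat.coprime_comm.mp h), ?_⟩
    rw [ZMod.coe_unitOfCoprime]
    exact ZMod.natCast_rightInverse _
  choose X hX using hXu
  have hz : ∀ (u : (ZMod n)ˣ) (i : Fin 4), (↑u * x i : ZMod n) ≠ 0 := by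
    intro u i
    rw [← hX i, ← Units.val_mul]
    exact Units.ne_zero _
  -- every generator has norm at least 2
  have hlow : ∀ u : (ZMod n)ˣ, (2 : ℝ) ≤ gNorm n (↑(u⁻¹)) x := by
    intro u
    have hmem : gNorm n (↑(u⁻¹)) x ∈
        {r : ℝ | ∃ g : ZMod n, IsAddGenerator n g ∧ r = gNorm n g x} :=
      ⟨_, isAddGenerator_unit n _, rfl⟩
    have hbdd : BddBelow {r : ℝ | ∃ g : ZMod n, IsAddGenerator n g ∧ r = gNorm n g x} := by
      apply Set.Finite.bddBelow
      apply Set.Finite.subset (Set.finite_range (fun g : ZMod n => gNorm n g x))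
      rintro r ⟨g, _, rfl⟩
      exact ⟨g, rfl⟩
    have h := csInf_le hbdd hmem
    unfold seqIndex at hind
    rw [hind] at h
    exact h
  -- hence sum of representatives is at least 2n for every unit
  have hnorm : ∀ u : (ZMod n)ˣ, 2 * n ≤ ∑ i, rep n (↑u * x i) := by
    intro u
    have h := hlow u
    unfold gNorm at h
    have hg : ((↑(u⁻¹) : ZMod n))⁻¹ = (↑u : ZMod n) := by
      rw [ZMod.inv_coe_unit]
      simp
    rw [hg] at h
    have hnpos : (0 : ℝ) < n := by exact_mod_cast hn
    rw [le_div_iff₀ hnpos] at h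
    have h2 : ((2 * n : ℕ) : ℝ) ≤ ((∑ i, rep n (↑u * x i) : ℕ) : ℝ) := by
      push_cast
      linarith
    exact_mod_cast h2
  -- and therefore exactly 2n
  have hkey : ∀ u : (ZMod n)ˣ, ∑ i, rep n (↑u * x i) = 2 * n := by
    intro u
    have h1 := hnorm u
    have h2 := hnorm (-u)
    have hneg : ∀ i, rep n (↑(-u) * x i) = n - rep n (↑u * x i) := by
      intro i
      rw [Units.val_neg, neg_mul]
      rw [rep, rep, if_neg (hz u i), if_neg (fun hh => hz u i (neg_eq_zero.mp hh))]
      haveI : NeZero (↑u * x i : ZMod n) := ⟨hz u i⟩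
      exact ZMod.val_neg_of_ne_zero _
    rw [Finset.sum_congr rfl (fun i _ => hneg i)] at h2
    have hub : ∀ i, rep n (↑u * x i) ≤ n := by
      intro i
      rw [rep, if_neg (hz u i)]
      exact le_of_lt (ZMod.val_lt _)
    have u0 := hub 0; have u1 := hub 1; have u2 := hub 2; have u3 := hub 3
    simp only [Fin.sum_univ_four] at h1 h2 ⊢
    omega
  -- set up the rational-valued function f
  set f : (ZMod n)ˣ → ℚ := fun t => ((t : ZMod n).val : ℚ)/n - 1/2 with hf
  have hfv : ∀ (u : (ZMod n)ˣ) (i : Fin 4), f (X i * u) = (rep n (↑u * x i) : ℚ)/n - 1/2 := by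
    intro u i
    rw [hf]
    have : ((X i * u : (ZMod n)ˣ) : ZMod n).val = rep n (↑u * x i) := by
      rw [rep, if_neg (hz u i)]
      congr 1
      rw [Units.val_mul, hX, mul_comm]
    simp only [this]
  -- pointwise sum of the permuted f's is zero
  have hpt : ∀ u : (ZMod n)ˣ,
      f (X (σ 0) * u) + f (X (σ 1) * u) + f (X (σ 2) * u) + f (X (σ 3) * u) = 0 := by
    intro u
    have h := hkey u
    have hperm : rep n (↑u * x (σ 0)) + rep n (↑u * x (σ 1)) + rep n (↑u * x (σ 2))
        + rep n (↑u * x (σ 3)) = 2 * n := by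
      have he := Fintype.sum_equiv σ (fun i => rep n (↑u * x (σ i)))
        (fun i => rep n (↑u * x i)) (fun i => rfl)
      rw [h] at he
      rw [Fin.sum_univ_four] at he
      exact he
    rw [hfv u (σ 0), hfv u (σ 1), hfv u (σ 2), hfv u (σ 3)]
    have hq : ((rep n (↑u * x (σ 0)) : ℚ) + rep n (↑u * x (σ 1)) + rep n (↑u * x (σ 2))
        + rep n (↑u * x (σ 3))) = 2 * n := by exact_mod_cast congrArg (Nat.cast : ℕ → ℚ) hperm
    have hn0 : (n : ℚ) ≠ 0 := by positivity
    field_simp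
    linarith
  -- reindexing lemmas
  have hre : ∀ (F : (ZMod n)ˣ → ℚ) (a : (ZMod n)ˣ), ∑ u, F (a * u) = ∑ u, F u :=
    fun F a => Fintype.sum_bijective (fun u => a * u) (Group.mulLeft_bijective a) _ _
      (fun u => rfl)
  -- rewrite both Dedekind sums
  have hinv : ∀ i j : Fin 4, (x i)⁻¹ * x j = ↑((X i)⁻¹ * (X j)) := by
    intro i j
    rw [← hX i, ← hX j, ZMod.inv_coe_unit, Units.val_mul]
  have hded : ∀ i j : Fin 4,
      dedekindT ((((x i)⁻¹ * x j : ZMod n)).val : ℤ) n =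
        ∑ u : (ZMod n)ˣ, (f (X i * u) + 1/2) * f (X j * u) := by
    intro i j
    rw [hinv i j, dedekindT_eq_sum_units n hn2 ((X i)⁻¹ * (X j))]
    have step : ∀ u : (ZMod n)ˣ,
        ((u : ZMod n).val : ℚ) / n *
          (((((X i)⁻¹ * (X j) * u : (ZMod n)ˣ) : ZMod n).val : ℚ) / n - 1/2) =
        (f u + 1/2) * f ((X i)⁻¹ * (X j) * u) := by
      intro u
      rw [hf]
      ring
    rw [Finset.sum_congr rfl fun u _ => step u]
    have := hre (fun v => (f v + 1/2) * f ((X i)⁻¹ * (X j) * v)) (X i)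
    rw [← this]
    refine Finset.sum_congr rfl fun u _ => ?_
    have harr : (X i)⁻¹ * (X j) * (X i * u) = X j * u := by
      rw [mul_assoc, mul_left_comm (X j) (X i) u, inv_mul_cancel_left]
    rw [harr]
  rw [hded (σ 0) (σ 1), hded (σ 2) (σ 3)]
  -- final algebra
  refine sum_pair_eq _ _ _ _ (fun u => f u) ?_ ?_ ?_ ?_ ?_ ?_ hpt
  · exact hre (fun v => (f v)^2) (X (σ 0))
  · exact hre (fun v => (f v)^2) (X (σ 1))
  · exact hre (fun v => (f v)^2) (X (σ 2))
  · exact hre (fun v => (f v)^2) (X (σ 3))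
  · exact hre f (X (σ 1))
  · exact hre f (X (σ 3))
end

section
/- Let n be a positive integer and let S = (x_1)(x_2)(x_3)(x_4) be a minimal zero-sum sequence over Z/n such that ||S||_g = 2 for all generators g of Z/n and gcd(n, x_i) = 1 for all i. Then Σ_{0 < g < n, gcd(g,n)=1} (g x_2)_n (g x_4)_n = Σ_{0 < g < n, gcd(g,n)=1} (g x_1)_n (g x_3)_n. -/
open Finset

/-- If `S = (x₁)(x₂)(x₃)(x₄)` is a minimal zero-sum sequence over `ZMod n` with
`‖S‖_g = 2` for all generators `g` and `gcd(n, xᵢ) = 1` for all `i`, then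
`∑_{0<g<n, gcd(g,n)=1} (g x₂)_n (g x₄)_n = ∑_{0<g<n, gcd(g,n)=1} (g x₁)_n (g x₃)_n`. -/
theorem cross_sums_eq (n : ℕ) (hn : 0 < n) (x : Fin 4 → ZMod n)
    (hx : IsMinZeroSum4 n x)
    (hnorm : ∀ g : ZMod n, IsAddGenerator n g → gNorm n g x = 2)
    (hcop : ∀ i, Nat.gcd n (rep n (x i)) = 1) :
    ∑ g ∈ (Finset.Ioo 0 n).filter (fun g => Nat.gcd g n = 1),
        ((g : ZMod n) * x 1).val * ((g : ZMod n) * x 3).val =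
      ∑ g ∈ (Finset.Ioo 0 n).filter (fun g => Nat.gcd g n = 1),
        ((g : ZMod n) * x 0).val * ((g : ZMod n) * x 2).val := by
  classical
  -- dispose of n = 1
  rcases eq_or_lt_of_le (show 1 ≤ n from hn) with h1 | hn2
  · have : Finset.Ioo 0 n = ∅ := by rw [← h1]; rfl
    simp [this]
  haveI : NeZero n := ⟨hn.ne'⟩
  haveI : Fact (1 < n) := ⟨hn2⟩
  set F := (Finset.Ioo 0 n).filter (fun g => Nat.gcd g n = 1) with hF
  have hmemF : ∀ g : ℕ, g ∈ F ↔ 0 < g ∧ g < n ∧ Nat.gcd g n = 1 := by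
    intro g; simp [hF, Finset.mem_filter, Finset.mem_Ioo, and_assoc]
  -- each x i is a unit
  have hxunit : ∀ i, IsUnit (x i) := by
    intro i
    have h := hcop i
    have hx0 : x i ≠ 0 := by
      intro h0
      have hrep : rep n (x i) = n := by rw [rep, if_pos h0]
      rw [hrep, Nat.gcd_self] at h
      omega
    rw [rep, if_neg hx0] at h
    have : IsUnit (((x i).val : ZMod n)) :=
      (ZMod.isUnit_iff_coprime _ n).mpr (Nat.coprime_comm.mp h)
    rwa [ZMod.natCast_val, ZMod.cast_id] at this
  -- units are generators
  have hgen : ∀ w : ZMod n, IsUnit w → IsAddGenerator n w := by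
    intro w hw
    rw [IsAddGenerator, AddSubgroup.eq_top_iff']
    intro a
    rw [AddSubgroup.mem_zmultiples_iff]
    refine ⟨((a * w⁻¹).val : ℤ), ?_⟩
    have : (((a * w⁻¹).val : ℤ) : ZMod n) = a * w⁻¹ := by
      push_cast
      rw [ZMod.natCast_val, ZMod.cast_id]
    rw [zsmul_eq_mul, this, mul_assoc, ZMod.inv_mul_of_unit w hw, mul_one]
  -- elements of F give units
  have hFunit : ∀ g : ℕ, g ∈ F → IsUnit ((g : ZMod n)) := by
    intro g hg
    exact (ZMod.isUnit_iff_coprime g n).mpr ((hmemF g).mp hg).2.2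
  -- vals of units lie in F
  have hvalF : ∀ w : ZMod n, IsUnit w → w.val ∈ F := by
    intro w hw
    rw [hmemF]
    refine ⟨?_, ZMod.val_lt w, ?_⟩
    · have : w ≠ 0 := hw.ne_zero
      have := (ZMod.val_eq_zero w).not.mpr this
      omega
    · obtain ⟨u, rfl⟩ := hw
      exact ZMod.val_coe_unit_coprime u
  -- the key pointwise sum identity
  have keysum : ∀ g ∈ F, ((g : ZMod n) * x 0).val + ((g : ZMod n) * x 1).val +
      ((g : ZMod n) * x 2).val + ((g : ZMod n) * x 3).val = 2 * n := by
    intro g hg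
    set w : ZMod n := ((g : ZMod n)) with hw
    have hwu : IsUnit w := hFunit g hg
    have hinvu : IsUnit w⁻¹ :=
      IsUnit.of_mul_eq_one w (ZMod.inv_mul_of_unit w hwu)
    have hinvinv : (w⁻¹)⁻¹ = w := by
      have h2 : w⁻¹ * (w⁻¹)⁻¹ = 1 := ZMod.mul_inv_of_unit _ hinvu
      calc (w⁻¹)⁻¹ = (w * w⁻¹) * (w⁻¹)⁻¹ := by
                      rw [ZMod.mul_inv_of_unit w hwu, one_mul]
        _ = w * (w⁻¹ * (w⁻¹)⁻¹) := by ring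
        _ = w := by rw [h2, mul_one]
    have hnorm' := hnorm w⁻¹ (hgen _ hinvu)
    rw [gNorm, hinvinv] at hnorm'
    have hne : ∀ i : Fin 4, w * x i ≠ 0 := fun i => (hwu.mul (hxunit i)).ne_zero
    have hrep : ∀ i : Fin 4, rep n (w * x i) = (w * x i).val := by
      intro i; rw [rep, if_neg (hne i)]
    simp only [hrep] at hnorm'
    have hnR : (n : ℝ) ≠ 0 := Nat.cast_ne_zero.mpr hn.ne'
    rw [div_eq_iff hnR] at hnorm'
    have : (∑ i, ((w * x i).val : ℕ)) = 2 * n := by exact_mod_cast hnorm'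
    rw [Fin.sum_univ_four] at this
    exact this
  -- reindexing lemma
  have reindex : ∀ (v : ZMod n), IsUnit v → ∀ φ : ZMod n → ℤ,
      ∑ g ∈ F, φ ((g : ZMod n) * v) = ∑ g ∈ F, φ (g : ZMod n) := by
    intro v hv φ
    refine Finset.sum_nbij' (i := fun g => (((g : ZMod n)) * v).val)
      (j := fun g => (((g : ZMod n)) * v⁻¹).val) ?_ ?_ ?_ ?_ ?_
    · intro g hg
      exact hvalF _ ((hFunit g hg).mul hv)
    · intro g hg
      exact hvalF _ ((hFunit g hg).mul
        (IsUnit.of_mul_eq_one v (ZMod.inv_mul_of_unit v hv)))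
    · intro g hg
      show ((((((g : ZMod n) * v).val : ℕ)) : ZMod n) * v⁻¹).val = g
      have h1 : ((((g : ZMod n) * v).val : ℕ) : ZMod n) = (g : ZMod n) * v := by
        rw [ZMod.natCast_val, ZMod.cast_id]
      rw [h1, mul_assoc, ZMod.mul_inv_of_unit v hv, mul_one,
        ZMod.val_natCast_of_lt ((hmemF g).mp hg).2.1]
    · intro g hg
      show ((((((g : ZMod n) * v⁻¹).val : ℕ)) : ZMod n) * v).val = g
      have h1 : ((((g : ZMod n) * v⁻¹).val : ℕ) : ZMod n) = (g : ZMod n) * v⁻¹ := by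
        rw [ZMod.natCast_val, ZMod.cast_id]
      rw [h1, mul_assoc, ZMod.inv_mul_of_unit v hv, mul_one,
        ZMod.val_natCast_of_lt ((hmemF g).mp hg).2.1]
    · intro g hg
      have h1 : ((((g : ZMod n) * v).val : ℕ) : ZMod n) = (g : ZMod n) * v := by
        rw [ZMod.natCast_val, ZMod.cast_id]
      rw [h1]
  -- sums of φ(g * x i) are independent of i
  have hconst : ∀ (φ : ZMod n → ℤ) (i : Fin 4),
      ∑ g ∈ F, φ ((g : ZMod n) * x i) = ∑ g ∈ F, φ ((g : ZMod n) * x 0) := by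
    intro φ i
    have hx0inv : IsUnit (x 0)⁻¹ :=
      IsUnit.of_mul_eq_one (x 0) (ZMod.inv_mul_of_unit _ (hxunit 0))
    have hv : IsUnit (x i * (x 0)⁻¹) := (hxunit i).mul hx0inv
    have h := reindex (x i * (x 0)⁻¹) hv (fun z => φ (z * x 0))
    have hrw : ∀ z : ZMod n, z * (x i * (x 0)⁻¹) * x 0 = z * x i := by
      intro z
      rw [mul_assoc, mul_assoc, ZMod.inv_mul_of_unit _ (hxunit 0), mul_one]
    simp only [hrw] at h
    exact h
  -- abbreviations
  set a : Fin 4 → ℕ → ℤ := fun i g => (((g : ZMod n) * x i).val : ℤ) with ha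
  have hpt : ∀ g ∈ F, a 0 g + a 1 g + a 2 g + a 3 g = 2 * (n : ℤ) := by
    intro g hg
    have := keysum g hg
    simp only [ha]
    exact_mod_cast this
  have hA : ∀ i : Fin 4, ∑ g ∈ F, a i g = ∑ g ∈ F, a 0 g :=
    fun i => hconst (fun z => (z.val : ℤ)) i
  have hB : ∀ i : Fin 4, ∑ g ∈ F, (a i g) ^ 2 = ∑ g ∈ F, (a 0 g) ^ 2 :=
    fun i => hconst (fun z => (z.val : ℤ) ^ 2) i
  -- the pointwise symmetric identity summed
  have hsym : ∑ g ∈ F, (2 * (a 1 g * a 3 g) + ((a 1 g ^ 2 + a 3 g ^ 2)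
        + 2 * (n : ℤ) * (a 0 g + a 2 g)))
      = ∑ g ∈ F, (2 * (a 0 g * a 2 g) + ((a 0 g ^ 2 + a 2 g ^ 2)
        + 2 * (n : ℤ) * (a 1 g + a 3 g))) := by
    refine Finset.sum_congr rfl fun g hg => ?_
    have h := hpt g hg
    linear_combination (a 1 g + a 3 g - a 0 g - a 2 g) * h
  simp only [Finset.sum_add_distrib] at hsym
  simp only [← Finset.mul_sum] at hsym
  simp only [Finset.sum_add_distrib] at hsym
  have hmain : ∑ g ∈ F, (a 1 g * a 3 g) = ∑ g ∈ F, (a 0 g * a 2 g) := by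
    have e1 := hA 1; have e2 := hA 2; have e3 := hA 3
    have f1 := hB 1; have f2 := hB 2; have f3 := hB 3
    rw [e1, e2, e3, f1, f2, f3] at hsym
    linarith [hsym]
  have : (↑(∑ g ∈ F, ((g : ZMod n) * x 1).val * ((g : ZMod n) * x 3).val) : ℤ)
      = (↑(∑ g ∈ F, ((g : ZMod n) * x 0).val * ((g : ZMod n) * x 2).val) : ℤ) := by
    push_cast
    exact hmain
  exact_mod_cast this
end

section
/- Let k be a prime and h an integer with gcd(h, k) = 1. Then 12k·s(h, k) ≡ h + h̄ (mod k), where h̄ denotes an integer with h·h̄ ≡ 1 (mod k); that is, 12k·s(h,k) is an integer congruent to h + h̄ modulo k. -/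
open Finset

lemma sum_Icc_id_q (n : ℕ) : ∑ r ∈ Icc 1 n, (r:ℚ) = n*(n+1)/2 := by
  induction n with
  | zero => simp
  | succ n ih =>
    rw [Finset.sum_Icc_succ_top (by omega)]
    push_cast
    rw [ih]; ring

lemma sum_Icc_sq (n : ℕ) : 6 * ∑ r ∈ Icc 1 n, (r:ℤ)^2 = n*(n+1)*(2*n+1) := by
  induction n with
  | zero => simp
  | succ n ih =>
    rw [Finset.sum_Icc_succ_top (by omega), mul_add, ih]
    push_cast; ring

lemma inv_mod_aux (k : ℕ) (hk0 : 0 < k) (a b : ℤ) (hab : a * b ≡ 1 [ZMOD (k:ℤ)]) :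
    ∀ r ∈ Finset.range k, (((b * (((a*r) % k).toNat : ℤ)) % k).toNat) = r := by
  intro r hr
  rw [Finset.mem_range] at hr
  have hkZ : (0:ℤ) < (k:ℤ) := by exact_mod_cast hk0
  have h1 : (0:ℤ) ≤ (a*r) % k := Int.emod_nonneg _ (by omega)
  rw [Int.toNat_of_nonneg h1]
  have h2 : b * ((a*r) % k) ≡ b * (a*r) [ZMOD (k:ℤ)] :=
    Int.ModEq.mul_left b (Int.emod_emod_of_dvd _ dvd_rfl)
  have h3 : b * (a*r) ≡ 1 * r [ZMOD (k:ℤ)] := by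
    have := hab.mul_right (r : ℤ)
    calc b * (a*r) = a * b * r := by ring
      _ ≡ 1 * r [ZMOD (k:ℤ)] := this
  have h4 : (b * ((a*r) % k)) % k = (r : ℤ) % k := h2.trans (by simpa using h3)
  rw [h4, Int.emod_eq_of_lt (by positivity) (by exact_mod_cast hr)]
  simp

lemma sum_sq_emod (k : ℕ) (hk0 : 0 < k) (a b : ℤ) (hab : a * b ≡ 1 [ZMOD (k:ℤ)]) :
    ∑ r ∈ Finset.range k, ((a*r) % k)^2 = ∑ r ∈ Finset.range k, (r:ℤ)^2 := by
  have hba : b * a ≡ 1 [ZMOD (k:ℤ)] := by rwa [mul_comm] at hab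
  have hkZ : (0:ℤ) < (k:ℤ) := by exact_mod_cast hk0
  have hmem : ∀ (c : ℤ) (r : ℕ), r ∈ Finset.range k → ((c*r) % k).toNat ∈ Finset.range k := by
    intro c r _
    rw [Finset.mem_range]
    have := Int.emod_lt_of_pos (c*r) hkZ
    omega
  refine Finset.sum_nbij' (i := fun r => ((a*r) % k).toNat) (j := fun r => ((b*r) % k).toNat)
    (fun r hr => hmem a r hr) (fun r hr => hmem b r hr) ?_ ?_ ?_
  · intro r hr; exact inv_mod_aux k hk0 a b hab r hr
  · intro r hr; exact inv_mod_aux k hk0 b a hba r hr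
  · intro r hr
    have h1 : (0:ℤ) ≤ (a*r) % k := Int.emod_nonneg _ (by omega)
    rw [Int.toNat_of_nonneg h1]

/-- For a prime `k` and `gcd(h, k) = 1`, the quantity `12k·s(h,k)` is an integer
congruent to `h + h̄` modulo `k`, where `h·h̄ ≡ 1 (mod k)`. -/
theorem twelve_k_dedekindS_cong (k : ℕ) (hk : k.Prime) (h : ℤ)
    (hcop : Int.gcd h (k : ℤ) = 1) :
    ∀ hbar : ℤ, h * hbar ≡ 1 [ZMOD (k : ℤ)] →
      ∃ m : ℤ, 12 * (k : ℚ) * dedekindS h k = (m : ℚ) ∧ m ≡ h + hbar [ZMOD (k : ℤ)] := by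
  intro hbar hinv
  have hk0 : 0 < k := hk.pos
  have hkZ : (0:ℤ) < (k:ℤ) := by exact_mod_cast hk0
  have hkQ : (k:ℚ) ≠ 0 := by positivity
  set T : ℤ := ∑ r ∈ Icc 1 k, (r:ℤ) * ((h * r) % (k:ℤ)) with hTdef
  -- Step 1: 12k·s = (12T)/k - 3k(k+1)
  have hterm : ∀ r ∈ Icc 1 k,
      12 * (k:ℚ) * ((r : ℚ) / k * ((h : ℚ) * r / k - ⌊(h : ℚ) * r / k⌋ - 1 / 2))
        = ((12 * (r:ℤ) * ((h * r) % (k:ℤ)) : ℤ) : ℚ) / k - 6 * r := by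
    intro r _
    have hfe : (h:ℚ) * r = ((h * (r:ℤ) : ℤ) : ℚ) := by push_cast; ring
    have hfloor : ⌊(h:ℚ) * r / k⌋ = (h * (r:ℤ)) / (k:ℤ) := by
      rw [hfe]; exact_mod_cast Rat.floor_intCast_div_natCast (h * r) k
    have hρr : (((h * (r:ℤ)) % (k:ℤ) : ℤ) : ℚ)
        = (h:ℚ) * r - (k:ℚ) * (((h * (r:ℤ)) / (k:ℤ) : ℤ) : ℚ) := by
      rw [Int.emod_def]; push_cast; ring
    rw [hfloor]
    have e : ((12 * (r:ℤ) * ((h * r) % (k:ℤ)) : ℤ) : ℚ)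
        = 12 * r * ((h:ℚ) * r - (k:ℚ) * (((h * (r:ℤ)) / (k:ℤ) : ℤ) : ℚ)) := by
      push_cast [hρr]; ring
    rw [e]
    field_simp
    ring
  have hsum : 12 * (k:ℚ) * dedekindS h k = ((12 * T : ℤ) : ℚ) / k - 3*k*(k+1) := by
    unfold dedekindS
    rw [Finset.mul_sum, Finset.sum_congr rfl hterm, Finset.sum_sub_distrib]
    rw [← Finset.sum_div]
    congr 1
    · congr 1
      rw [hTdef]
      push_cast [Finset.mul_sum]
      exact Finset.sum_congr rfl fun r _ => by ring
    · rw [← Finset.mul_sum, sum_Icc_id_q]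
      ring
  -- Step 2: key divisibility
  have hsets1 : Finset.range k = insert 0 (Icc 1 (k-1)) := by
    ext x; simp only [Finset.mem_range, Finset.mem_insert, Finset.mem_Icc]; omega
  have hsets2 : Icc 1 k = insert k (Icc 1 (k-1)) := by
    ext x; simp only [Finset.mem_insert, Finset.mem_Icc]; omega
  have h0notin : (0:ℕ) ∉ Icc 1 (k-1) := by simp
  have hknotin : k ∉ Icc 1 (k-1) := by simp; omega
  have hSρ : ∑ r ∈ Icc 1 k, ((h * r) % (k:ℤ))^2
      = (∑ r ∈ Icc 1 k, (r:ℤ)^2) - (k:ℤ)^2 := by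
    have hb := sum_sq_emod k hk0 h hbar hinv
    have e1 : ∑ r ∈ Icc 1 k, ((h * r) % (k:ℤ))^2
        = ∑ r ∈ Icc 1 (k-1), ((h * r) % (k:ℤ))^2 := by
      rw [hsets2, Finset.sum_insert hknotin]
      simp [Int.mul_emod_left]
    have e2 : ∑ r ∈ Finset.range k, ((h * r) % (k:ℤ))^2
        = ∑ r ∈ Icc 1 (k-1), ((h * r) % (k:ℤ))^2 := by
      rw [hsets1, Finset.sum_insert h0notin]
      simp
    have e3 : ∑ r ∈ Finset.range k, (r:ℤ)^2
        = (∑ r ∈ Icc 1 k, (r:ℤ)^2) - (k:ℤ)^2 := by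
      rw [hsets1, hsets2, Finset.sum_insert h0notin, Finset.sum_insert hknotin]
      push_cast; ring
    rw [e1, ← e2, hb, e3]
  have hdvdA : (k:ℤ)^2 ∣ ∑ r ∈ Icc 1 k, ((h*(r:ℤ)) - (h * r) % (k:ℤ))^2 := by
    apply Finset.dvd_sum
    intro r _
    refine ⟨((h*(r:ℤ))/(k:ℤ))^2, ?_⟩
    have e : (h*(r:ℤ)) - (h * r) % (k:ℤ) = (k:ℤ) * ((h*(r:ℤ))/(k:ℤ)) := by
      rw [Int.emod_def]; ring
    rw [e]; ring
  have hA : ∑ r ∈ Icc 1 k, ((h*(r:ℤ)) - (h * r) % (k:ℤ))^2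
      = h^2 * (∑ r ∈ Icc 1 k, (r:ℤ)^2) - 2*h*T + ((∑ r ∈ Icc 1 k, (r:ℤ)^2) - (k:ℤ)^2) := by
    rw [← hSρ, hTdef, Finset.mul_sum, Finset.mul_sum, ← Finset.sum_sub_distrib,
      ← Finset.sum_add_distrib]
    exact Finset.sum_congr rfl fun r _ => by ring
  rw [hA] at hdvdA
  obtain ⟨c1, hc1⟩ := hdvdA
  have h6 := sum_Icc_sq k
  have key2 : (k:ℤ)^2 ∣ 12*h*T - (k:ℤ)*(h^2+1) := by
    refine ⟨-6*c1 + (h^2+1)*(2*(k:ℤ)+3) - 6, ?_⟩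
    linear_combination (-6:ℤ)*hc1 + (h^2+1)*h6
  have hk12T : (k:ℤ) ∣ 12*T := by
    have hdk : (k:ℤ) ∣ 12*h*T - (k:ℤ)*(h^2+1) :=
      dvd_trans (dvd_pow_self (k:ℤ) two_ne_zero) key2
    have hmul : (k:ℤ) ∣ h * (12*T) := by
      have h2 : h * (12*T) = (12*h*T - (k:ℤ)*(h^2+1)) + (k:ℤ)*(h^2+1) := by ring
      rw [h2]; exact dvd_add hdk (Dvd.intro _ rfl)
    exact Int.dvd_of_dvd_mul_right_of_gcd_one hmul (by rw [Int.gcd_comm]; exact hcop)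
  obtain ⟨c, hc⟩ := hk12T
  refine ⟨c - 3*(k:ℤ)*((k:ℤ)+1), ?_, ?_⟩
  · rw [hsum]
    have e : ((12*T : ℤ):ℚ) = (k:ℚ) * (c:ℚ) := by exact_mod_cast hc
    rw [e]
    push_cast
    field_simp
  · obtain ⟨d, hd⟩ := key2
    have hch : h * c ≡ h^2 + 1 [ZMOD (k:ℤ)] := by
      rw [Int.modEq_iff_dvd]
      refine ⟨-d, ?_⟩
      apply mul_left_cancel₀ (show (k:ℤ) ≠ 0 by positivity)
      linear_combination h*hc - hd
    have hmc : (c - 3*(k:ℤ)*((k:ℤ)+1)) ≡ c [ZMOD (k:ℤ)] := by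
      rw [Int.modEq_iff_dvd]
      exact ⟨3*((k:ℤ)+1), by ring⟩
    have hbh : hbar * h ≡ 1 [ZMOD (k:ℤ)] := by rwa [mul_comm] at hinv
    have e2 : c ≡ hbar * (h * c) [ZMOD (k:ℤ)] := by
      have := (hbh.mul_right c).symm
      simpa [mul_assoc] using this
    have e3 : hbar * (h*c) ≡ hbar * (h^2+1) [ZMOD (k:ℤ)] := hch.mul_left hbar
    have e4 : hbar * (h^2+1) ≡ h + hbar [ZMOD (k:ℤ)] := by
      have h5 := hbh.mul_right h
      calc hbar*(h^2+1) = hbar*h*h + hbar := by ring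
        _ ≡ 1*h + hbar [ZMOD (k:ℤ)] := h5.add_right hbar
        _ = h + hbar := by ring
    exact hmc.trans (e2.trans (e3.trans e4))
end

section
/- Let k be a prime and let h_1, h_2 be integers coprime to k. If s(h_1, k) = s(h_2, k), then h_1 ≡ h_2 (mod k) or h_1 ≡ h̄_2 (mod k), where h̄_2 denotes an integer with h_2·h̄_2 ≡ 1 (mod k). -/
open Finset

private lemma sum_sq_Icc (k : ℕ) : 6 * ∑ r ∈ Icc 1 k, (r:ℤ)^2 = k*(k+1)*(2*k+1) := by
  induction k with
  | zero => simp
  | succ n ih =>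
    rw [Finset.sum_Icc_succ_top (by omega)]
    push_cast
    push_cast at ih
    ring_nf
    ring_nf at ih
    linarith

private lemma sum_id_Icc (k : ℕ) : 2 * ∑ r ∈ Icc 1 k, (r:ℤ) = k*(k+1) := by
  induction k with
  | zero => simp
  | succ n ih =>
    rw [Finset.sum_Icc_succ_top (by omega)]
    push_cast
    push_cast at ih
    ring_nf
    ring_nf at ih
    linarith

private lemma range_succ_eq_insert (k : ℕ) : Finset.range (k+1) = insert 0 (Icc 1 k) := by
  ext x; simp [Finset.mem_range, Finset.mem_Icc]; omega

private lemma zmod_sum_eq_range (k : ℕ) [NeZero k] (F : ZMod k → ℤ) :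
    ∑ x : ZMod k, F x = ∑ r ∈ range k, F r := by
  refine Finset.sum_nbij' (fun x => x.val) (fun r => (r : ZMod k)) ?_ ?_ ?_ ?_ ?_
  · intro a _; exact Finset.mem_range.mpr (ZMod.val_lt a)
  · intro r _; exact Finset.mem_univ _
  · intro a _; exact ZMod.natCast_rightInverse a
  · intro r hr; exact ZMod.val_cast_of_lt (Finset.mem_range.mp hr)
  · intro a _; rw [ZMod.natCast_rightInverse a]

private lemma sum_emod_sq (k : ℕ) (hk : k.Prime) (h : ℤ) (hcop : Int.gcd h (k:ℤ) = 1) :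
    ∑ r ∈ range k, ((h * r) % (k:ℤ))^2 = ∑ r ∈ range k, ((r:ℤ))^2 := by
  haveI : Fact k.Prime := ⟨hk⟩
  have hne : (h : ZMod k) ≠ 0 := by
    rw [Ne, ZMod.intCast_zmod_eq_zero_iff_dvd]
    intro hdvd
    have h1 : ((k:ℤ)) ∣ (Int.gcd h k : ℤ) := Int.dvd_coe_gcd hdvd dvd_rfl
    rw [hcop] at h1
    have := Int.le_of_dvd one_pos h1
    have := hk.two_le
    omega
  set F : ZMod k → ℤ := fun x => (x.val : ℤ)^2 with hF
  have h1 : ∑ x : ZMod k, F ((h : ZMod k) * x) = ∑ x : ZMod k, F x :=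
    Fintype.sum_bijective _ (Equiv.mulLeft₀ (h : ZMod k) hne).bijective _ _ (fun x => rfl)
  have h2 : ∑ r ∈ range k, ((h * r) % (k:ℤ))^2 = ∑ x : ZMod k, F ((h : ZMod k) * x) := by
    rw [zmod_sum_eq_range k (fun x => F ((h : ZMod k) * x))]
    refine Finset.sum_congr rfl fun r _ => ?_
    have : (h : ZMod k) * (r : ZMod k) = ((h * r : ℤ) : ZMod k) := by push_cast; ring
    rw [this, hF]
    simp only []
    rw [ZMod.val_intCast]
  have h3 : ∑ x : ZMod k, F x = ∑ r ∈ range k, ((r:ℤ))^2 := by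
    rw [zmod_sum_eq_range k F]
    refine Finset.sum_congr rfl fun r hr => ?_
    rw [hF]; simp only []
    rw [ZMod.val_cast_of_lt (Finset.mem_range.mp hr)]
  rw [h2, h1, h3]

private lemma sum_emod_sq_Icc (k : ℕ) (hk : k.Prime) (h : ℤ) (hcop : Int.gcd h (k:ℤ) = 1) :
    ∑ r ∈ Icc 1 k, ((h * r) % (k:ℤ))^2 = (∑ r ∈ Icc 1 k, ((r:ℤ))^2) - (k:ℤ)^2 := by
  have hperm := sum_emod_sq k hk h hcop
  have h0 : (0:ℕ) ∉ Icc 1 k := by simp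
  have e1 : ∑ r ∈ range (k+1), ((h * r) % (k:ℤ))^2
      = ((h * (0:ℕ)) % (k:ℤ))^2 + ∑ r ∈ Icc 1 k, ((h * r) % (k:ℤ))^2 := by
    rw [range_succ_eq_insert, Finset.sum_insert h0]
  have e2 : ∑ r ∈ range (k+1), ((r:ℤ))^2 = ((0:ℕ):ℤ)^2 + ∑ r ∈ Icc 1 k, ((r:ℤ))^2 := by
    rw [range_succ_eq_insert, Finset.sum_insert h0]
  rw [Finset.sum_range_succ] at e1 e2
  have hmk : (h * (k:ℕ)) % (k:ℤ) = 0 := by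
    simp [Int.mul_emod_right]
  simp only [Nat.cast_zero, mul_zero] at e1 e2
  rw [hmk] at e1
  norm_num at e1 e2
  rw [hperm] at e1
  linarith

private lemma emod_cast_zmod (k : ℕ) (a : ℤ) : ((a % (k:ℤ) : ℤ) : ZMod k) = ((a : ℤ) : ZMod k) := by
  rw [ZMod.intCast_eq_intCast_iff]
  exact Int.emod_emod_of_dvd a dvd_rfl

private lemma key_cong (k : ℕ) (hk : k.Prime) (h : ℤ) (hcop : Int.gcd h (k:ℤ) = 1) :
    ((12 * h * ∑ r ∈ Icc 1 k, (r:ℤ) * ((h*r)/(k:ℤ)) : ℤ) : ZMod k)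
      = ((h^2 - 1 : ℤ) : ZMod k) := by
  have hQ := sum_sq_Icc k
  have hsq := sum_emod_sq_Icc k hk h hcop
  set S : ℤ := ∑ r ∈ Icc 1 k, (r:ℤ) * ((h*r)/(k:ℤ)) with hS
  set T : ℤ := ∑ r ∈ Icc 1 k, ((h*r) % (k:ℤ)) * ((h*r)/(k:ℤ)) with hT
  set Q : ℤ := ∑ r ∈ Icc 1 k, (r:ℤ)^2 with hQdef
  have hkey : (k:ℤ) * T = h^2*Q - (k:ℤ)*h*S - (Q - (k:ℤ)^2) := by
    have e1 : (k:ℤ) * T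
        = ∑ r ∈ Icc 1 k, (h^2*(r:ℤ)^2 - (k:ℤ)*h*((r:ℤ)*((h*r)/(k:ℤ))) - ((h*r) % (k:ℤ))^2) := by
      rw [hT, Finset.mul_sum]
      refine Finset.sum_congr rfl fun r _ => ?_
      linear_combination (h*(r:ℤ) + (h*(r:ℤ)) % (k:ℤ)) * (Int.mul_ediv_add_emod (h*r) (k:ℤ))
    rw [e1, Finset.sum_sub_distrib, Finset.sum_sub_distrib, ← Finset.mul_sum, ← Finset.mul_sum,
      ← hQdef, ← hS, hsq]
  have hk0 : (k:ℤ) ≠ 0 := by exact_mod_cast hk.ne_zero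
  have hdiv : 6*T = (h^2-1)*((k:ℤ)+1)*(2*(k:ℤ)+1) - 6*h*S + 6*(k:ℤ) :=
    mul_left_cancel₀ hk0 (by linear_combination 6 * hkey + (h^2-1) * hQ)
  have hTS : ((T : ℤ) : ZMod k) = ((h * S : ℤ) : ZMod k) := by
    rw [hT, hS, Finset.mul_sum]
    push_cast
    refine Finset.sum_congr rfl fun r _ => ?_
    ring
  have hcast := congrArg (fun z : ℤ => (z : ZMod k)) hdiv
  simp only [Int.cast_sub, Int.cast_add, Int.cast_mul, Int.cast_ofNat] at hcast
  push_cast at hcast hTS ⊢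
  rw [ZMod.natCast_self] at hcast
  linear_combination hcast - 6 * hTS

private lemma dedekindS_mul (k : ℕ) (hk0 : k ≠ 0) (h : ℤ) :
    dedekindS h k * (12*(k:ℚ)^2)
      = ((12*h*(∑ r ∈ Icc 1 k, (r:ℤ)^2)
          - 12*(k:ℤ)*(∑ r ∈ Icc 1 k, (r:ℤ)*((h*(r:ℤ))/(k:ℤ)))
          - 6*(k:ℤ)*(∑ r ∈ Icc 1 k, (r:ℤ)) : ℤ) : ℚ) := by
  rw [dedekindS, Finset.sum_mul]
  push_cast
  rw [Finset.mul_sum, Finset.mul_sum, Finset.mul_sum, ← Finset.sum_sub_distrib,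
    ← Finset.sum_sub_distrib]
  refine Finset.sum_congr rfl fun r _ => ?_
  have hfl : ⌊(h : ℚ) * r / k⌋ = h * (r:ℤ) / (k:ℤ) := by
    rw [show (h : ℚ) * r / k = ((h*(r:ℤ) : ℤ) : ℚ) / ((k:ℕ) : ℚ) by push_cast; ring]
    exact Rat.floor_intCast_div_natCast _ _
  rw [hfl]
  have hkq : (k:ℚ) ≠ 0 := Nat.cast_ne_zero.mpr hk0
  field_simp
  ring

/-- For a prime `k` and `h₁, h₂` coprime to `k`, if `s(h₁, k) = s(h₂, k)` then
`h₁ ≡ h₂ (mod k)` or `h₁ ≡ h̄₂ (mod k)` where `h₂·h̄₂ ≡ 1 (mod k)`. -/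
theorem dedekindS_inj (k : ℕ) (hk : k.Prime) (h₁ h₂ : ℤ)
    (hcop₁ : Int.gcd h₁ (k : ℤ) = 1) (hcop₂ : Int.gcd h₂ (k : ℤ) = 1)
    (hs : dedekindS h₁ k = dedekindS h₂ k) :
    h₁ ≡ h₂ [ZMOD (k : ℤ)] ∨
      ∃ hbar₂ : ℤ, h₂ * hbar₂ ≡ 1 [ZMOD (k : ℤ)] ∧ h₁ ≡ hbar₂ [ZMOD (k : ℤ)] := by
  have hk0 : (k:ℤ) ≠ 0 := by exact_mod_cast hk.ne_zero
  set S₁ : ℤ := ∑ r ∈ Icc 1 k, (r:ℤ) * ((h₁*r)/(k:ℤ)) with hS₁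
  set S₂ : ℤ := ∑ r ∈ Icc 1 k, (r:ℤ) * ((h₂*r)/(k:ℤ)) with hS₂
  set Q : ℤ := ∑ r ∈ Icc 1 k, (r:ℤ)^2 with hQdef
  set R : ℤ := ∑ r ∈ Icc 1 k, (r:ℤ) with hRdef
  have hQ := sum_sq_Icc k
  have hN : 12*h₁*Q - 12*(k:ℤ)*S₁ - 6*(k:ℤ)*R = 12*h₂*Q - 12*(k:ℤ)*S₂ - 6*(k:ℤ)*R := by
    have c1 := dedekindS_mul k hk.ne_zero h₁
    have c2 := dedekindS_mul k hk.ne_zero h₂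
    rw [hs, c2] at c1
    exact ((Int.cast_injective : Function.Injective ((↑) : ℤ → ℚ)) c1).symm
  have hE : 12*S₂ - 12*S₁ = 2*(h₂-h₁)*((k:ℤ)+1)*(2*(k:ℤ)+1) :=
    mul_left_cancel₀ hk0 (by linear_combination hN + 2*(h₂-h₁)*hQ)
  have K₁ := key_cong k hk h₁ hcop₁
  have K₂ := key_cong k hk h₂ hcop₂
  rw [← hS₁] at K₁
  rw [← hS₂] at K₂
  have hEc := congrArg (fun z : ℤ => (z : ZMod k)) hE
  push_cast at hEc K₁ K₂
  rw [ZMod.natCast_self] at hEc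
  have hzero : (((h₁-h₂)*(h₁*h₂-1) : ℤ) : ZMod k) = 0 := by
    push_cast
    linear_combination (h₂ : ZMod k) * K₁ - (h₁ : ZMod k) * K₂ + (h₁ : ZMod k) * (h₂ : ZMod k) * hEc
  have hdvd : (k:ℤ) ∣ (h₁-h₂)*(h₁*h₂-1) :=
    (ZMod.intCast_zmod_eq_zero_iff_dvd _ _).mp hzero
  have hkp : Prime (k:ℤ) := Nat.prime_iff_prime_int.mp hk
  rcases hkp.dvd_mul.mp hdvd with hd | hd
  · left
    exact (Int.modEq_iff_dvd.mpr hd).symm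
  · right
    refine ⟨h₁, ?_, Int.ModEq.refl _⟩
    refine Int.modEq_iff_dvd.mpr ?_
    have : (1:ℤ) - h₂*h₁ = -(h₁*h₂-1) := by ring
    rw [this]
    exact dvd_neg.mpr hd
end

section
/- Let G be a cyclic group of prime order p with gcd(p, 6) = 1 (equivalently, p ≥ 5). Then every minimal zero-sum sequence S of length 4 over G has ind(S) = 1. -/
open Finset

namespace IndexAux

/-- In `ZMod p` with `p` prime, every nonzero element is an additive generator. -/
lemma isAddGenerator_of_ne_zero {p : ℕ} (hp : p.Prime) {g : ZMod p} (hg : g ≠ 0) :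
    IsAddGenerator p g := by
  haveI := Fact.mk hp
  rw [IsAddGenerator, eq_top_iff]
  intro y _
  rw [AddSubgroup.mem_zmultiples_iff]
  refine ⟨((y * g⁻¹).val : ℤ), ?_⟩
  rw [zsmul_eq_mul]
  push_cast
  rw [ZMod.natCast_val, ZMod.cast_id]
  field_simp

lemma ne_zero_of_isAddGenerator {p : ℕ} (hp : p.Prime) {g : ZMod p}
    (h : IsAddGenerator p g) : g ≠ 0 := by
  haveI := Fact.mk hp
  intro h0
  have h1 : (1 : ZMod p) ∈ AddSubgroup.zmultiples g := by rw [h]; trivial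
  rw [AddSubgroup.mem_zmultiples_iff] at h1
  obtain ⟨k, hk⟩ := h1
  rw [h0, smul_zero] at hk
  exact one_ne_zero hk.symm

/-- The key existence statement: some nonzero multiplier `c` makes the four values sum to `p`. -/
lemma exists_good {p : ℕ} (hp : p.Prime) (hp2 : p ≠ 2) (x : Fin 4 → ZMod p)
    (hzero : (∑ i, x i) = 0) (hne : ∀ i, x i ≠ 0)
    (hpair : ∀ i j, i ≠ j → x i + x j ≠ 0) :
    ∃ c : ZMod p, c ≠ 0 ∧ (∑ i, (c * x i).val) = p := by
  haveI := Fact.mk hp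
  haveI : NeZero p := ⟨hp.ne_zero⟩
  have hp1 : 1 < p := hp.one_lt
  haveI : Fact (1 < p) := ⟨hp1⟩
  have hppos : 0 < p := hp.pos
  have hpC : (p : ℂ) ≠ 0 := Nat.cast_ne_zero.mpr hp.ne_zero
  set S : ZMod p → ℕ := fun c => ∑ i, (c * x i).val with hSdef
  -- basic facts about S
  have hterm : ∀ (c : ZMod p), c ≠ 0 → ∀ i, 1 ≤ (c * x i).val ∧ (c * x i).val < p := by
    intro c hc i
    constructor
    · rcases Nat.eq_zero_or_pos (c * x i).val with h | h
      · exact absurd ((ZMod.val_eq_zero _).mp h) (mul_ne_zero hc (hne i))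
      · exact h
    · exact ZMod.val_lt _
  have hSd : ∀ (c : ZMod p), c ≠ 0 → p ∣ S c := by
    intro c hc
    have : ((S c : ℕ) : ZMod p) = 0 := by
      rw [hSdef]
      push_cast
      simp only [ZMod.natCast_val, ZMod.cast_id]
      rw [← Finset.mul_sum, hzero, mul_zero]
    exact (ZMod.natCast_eq_zero_iff _ _).mp this
  have hSbound : ∀ (c : ZMod p), c ≠ 0 → 0 < S c ∧ S c < 4 * p := by
    intro c hc
    constructor
    · have := (hterm c hc 0).1
      have hle : 1 ≤ ∑ i, (c * x i).val := le_trans this (Finset.single_le_sum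
        (f := fun i => (c * x i).val) (fun i _ => Nat.zero_le _) (Finset.mem_univ 0))
      exact hle
    · rw [hSdef]
      calc ∑ i, (c * x i).val < ∑ _i : Fin 4, p := by
            apply Finset.sum_lt_sum_of_nonempty
            · exact Finset.univ_nonempty
            · intro i _; exact (hterm c hc i).2
        _ = 4 * p := by simp [Finset.sum_const, Finset.card_univ]
  have hScompl : ∀ (c : ZMod p), c ≠ 0 → S c + S (-c) = 4 * p := by
    intro c hc
    rw [hSdef]
    simp only
    rw [← Finset.sum_add_distrib]
    have : ∀ i, (c * x i).val + (-c * x i).val = p := by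
      intro i
      have h1 : -c * x i = -(c * x i) := by ring
      rw [h1, ZMod.neg_val, if_neg (mul_ne_zero hc (hne i))]
      have := (hterm c hc i).2
      omega
    rw [Finset.sum_congr rfl (fun i _ => this i)]
    simp [Finset.sum_const, Finset.card_univ]
  -- suppose no good c exists
  by_contra hcon
  push_neg at hcon
  have hS2 : ∀ (c : ZMod p), c ≠ 0 → S c = 2 * p := by
    intro c hc
    have hcn : -c ≠ 0 := neg_ne_zero.mpr hc
    obtain ⟨k, hk⟩ := hSd c hc
    obtain ⟨k', hk'⟩ := hSd (-c) hcn
    have hb := hSbound c hc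
    have hb' := hSbound (-c) hcn
    have hcompl := hScompl c hc
    have h1 := hcon c hc
    have h2 := hcon (-c) hcn
    -- p*k + p*k' = 4p, 1 ≤ k,k' ≤ 3, k ≠ 1, k' ≠ 1 → k = 2
    have hkk' : k + k' = 4 := by
      have : p * (k + k') = p * 4 := by rw [Nat.mul_add]; omega
      exact Nat.eq_of_mul_eq_mul_left hppos this
    have hk1 : k ≠ 1 := by intro h; rw [h, Nat.mul_one] at hk; exact h1 hk
    have hk'1 : k' ≠ 1 := by intro h; rw [h, Nat.mul_one] at hk'; exact h2 hk'
    have hkpos : 0 < k := by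
      rcases Nat.eq_zero_or_pos k with h | h
      · rw [h, Nat.mul_zero] at hk; omega
      · exact h
    have hk'pos : 0 < k' := by
      rcases Nat.eq_zero_or_pos k' with h | h
      · rw [h, Nat.mul_zero] at hk'; omega
      · exact h
    have : k = 2 := by omega
    rw [this] at hk; omega
  -- the pointwise identity
  set u : ZMod p := -(x 0) with hudef
  set v : ZMod p := -(x 1) with hvdef
  have hu : u ≠ 0 := neg_ne_zero.mpr (hne 0)
  have hv : v ≠ 0 := neg_ne_zero.mpr (hne 1)
  have hval : ∀ c : ZMod p,
      (c * x 2).val + (c * x 3).val = (c * u).val + (c * v).val := by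
    intro c
    by_cases hc : c = 0
    · simp [hc]
    · have h2p := hS2 c hc
      rw [hSdef] at h2p
      simp only [Fin.sum_univ_four] at h2p
      have hu1 : (c * u).val = p - (c * x 0).val := by
        rw [hudef]
        have h1 : c * -(x 0) = -(c * x 0) := by ring
        rw [h1, ZMod.neg_val, if_neg (mul_ne_zero hc (hne 0))]
      have hv1 : (c * v).val = p - (c * x 1).val := by
        rw [hvdef]
        have h1 : c * -(x 1) = -(c * x 1) := by ring
        rw [h1, ZMod.neg_val, if_neg (mul_ne_zero hc (hne 1))]
      have b0 := (hterm c hc 0); have b1 := (hterm c hc 1)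
      omega
  -- character setup
  set ζ : ℂ := Complex.exp (2 * Real.pi * Complex.I / p) with hζdef
  have hprim : IsPrimitiveRoot ζ p := Complex.isPrimitiveRoot_exp p hp.ne_zero
  have hζp : ζ ^ p = 1 := hprim.pow_eq_one
  set χ : AddChar (ZMod p) ℂ := AddChar.zmodChar p hζp with hχdef
  have hχ1 : ∀ y : ZMod p, y ≠ 0 → χ y ≠ 1 := by
    intro y hy
    rw [hχdef, AddChar.zmodChar_apply]
    refine hprim.pow_ne_one_of_pos_of_lt ?_ y.val_lt
    rcases Nat.eq_zero_or_pos y.val with h | h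
    · exact absurd ((ZMod.val_eq_zero _).mp h) hy
    · exact h.ne'
  have hχne1 : χ ≠ 1 := by
    intro h
    have := hχ1 1 one_ne_zero
    rw [h] at this
    exact this (AddChar.one_apply 1)
  have hsum0 : ∑ c : ZMod p, χ c = 0 := AddChar.sum_eq_zero_of_ne_one hχne1
  have hsumy : ∀ y : ZMod p, y ≠ 0 → ∑ w : ZMod p, χ (y * w) = 0 := by
    intro y hy
    have h1 := Equiv.sum_comp (Equiv.mulLeft₀ y hy) (fun c => χ c)
    simp only [Equiv.mulLeft₀_apply] at h1
    rw [h1, hsum0]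
  -- the weighted character sum
  have key1 : ∀ y : ZMod p, y ≠ 0 →
      (χ y - 1) * (∑ c : ZMod p, ((c.val : ℂ) * χ (c * y))) = p := by
    intro y hy
    have step1 : χ y * ∑ c : ZMod p, ((c.val : ℂ) * χ (c * y))
        = ∑ c : ZMod p, ((c.val : ℂ) * χ ((c + 1) * y)) := by
      rw [Finset.mul_sum]
      apply Finset.sum_congr rfl
      intro c _
      rw [add_mul, one_mul, AddChar.map_add_eq_mul]
      ring
    have step2 : ∑ c : ZMod p, ((c.val : ℂ) * χ ((c + 1) * y))
        = ∑ c : ZMod p, (((c - 1).val : ℂ) * χ (c * y)) := by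
      have h1 := Equiv.sum_comp (Equiv.addRight (1 : ZMod p))
        (fun c => (((c - 1).val : ℂ) * χ (c * y)))
      simp only [Equiv.coe_addRight, add_sub_cancel_right] at h1
      exact h1
    have hvalneg1 : (-1 : ZMod p).val = p - 1 := by
      rw [ZMod.neg_val, if_neg (one_ne_zero), ZMod.val_one]
    have step3 : ∀ c : ZMod p,
        (((c - 1).val : ℂ)) = (c.val : ℂ) - 1 + (if c = 0 then (p : ℂ) else 0) := by
      intro c
      by_cases hc : c = 0
      · rw [if_pos hc, hc, zero_sub, hvalneg1, ZMod.val_zero]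
        push_cast [Nat.cast_sub hp1.le]
        ring
      · rw [if_neg hc]
        have hcv : 1 ≤ c.val := by
          rcases Nat.eq_zero_or_pos c.val with h | h
          · exact absurd ((ZMod.val_eq_zero _).mp h) hc
          · exact h
        have : (c - 1).val = c.val - 1 := by
          rw [sub_eq_add_neg, ZMod.val_add, hvalneg1]
          have h1 : c.val + (p - 1) = (c.val - 1) + p := by omega
          rw [h1, Nat.add_mod_right, Nat.mod_eq_of_lt (by have := c.val_lt; omega)]
        rw [this]
        push_cast [Nat.cast_sub hcv]
        ring
    have expand : (χ y - 1) * (∑ c : ZMod p, ((c.val : ℂ) * χ (c * y)))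
        = ∑ c : ZMod p, ((((c - 1).val : ℂ) - (c.val : ℂ)) * χ (c * y)) := by
      rw [sub_mul, one_mul, step1, step2, ← Finset.sum_sub_distrib]
      apply Finset.sum_congr rfl
      intro c _
      ring
    rw [expand]
    have : ∀ c : ZMod p, (((c - 1).val : ℂ) - (c.val : ℂ)) * χ (c * y)
        = (if c = 0 then (p : ℂ) * χ (c * y) else 0) - χ (c * y) := by
      intro c
      rw [step3 c]
      by_cases hc : c = 0
      · rw [if_pos hc, if_pos hc]; ring
      · rw [if_neg hc, if_neg hc]; ring
    rw [Finset.sum_congr rfl (fun c _ => this c), Finset.sum_sub_distrib]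
    rw [Finset.sum_ite_eq' Finset.univ (0 : ZMod p) (fun c => (p : ℂ) * χ (c * y))]
    have hy0 : ∑ c : ZMod p, χ (c * y) = 0 := by
      have h2 : ∀ c : ZMod p, χ (c * y) = χ (y * c) := by intro c; rw [mul_comm]
      rw [Finset.sum_congr rfl (fun c _ => h2 c), hsumy y hy]
    rw [hy0]
    simp
  -- reindexed weighted sums
  have key2 : ∀ x0 : ZMod p, x0 ≠ 0 → ∀ w : ZMod p, w ≠ 0 →
      (∑ c : ZMod p, (((c * x0).val : ℂ) * χ (c * w))) = p / (χ (x0⁻¹ * w) - 1) := by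
    intro x0 hx0 w hw
    have hyne : x0⁻¹ * w ≠ 0 := mul_ne_zero (inv_ne_zero hx0) hw
    have hne1 : χ (x0⁻¹ * w) - 1 ≠ 0 := sub_ne_zero.mpr (hχ1 _ hyne)
    have h1 := Equiv.sum_comp (Equiv.mulRight₀ x0⁻¹ (inv_ne_zero hx0))
      (fun c => (((c * x0).val : ℂ) * χ (c * w)))
    simp only [Equiv.mulRight₀_apply] at h1
    have h2 : ∀ m : ZMod p, (((m * x0⁻¹ * x0).val : ℂ) * χ (m * x0⁻¹ * w))
        = ((m.val : ℂ) * χ (m * (x0⁻¹ * w))) := by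
      intro m
      rw [mul_assoc m x0⁻¹ x0, inv_mul_cancel₀ hx0, mul_one, mul_assoc]
    rw [Finset.sum_congr rfl (fun m _ => h2 m)] at h1
    rw [← h1, eq_div_iff hne1, mul_comm, key1 _ hyne]
  -- abbreviations
  set A : ZMod p := u⁻¹ with hAdef
  set B : ZMod p := v⁻¹ with hBdef
  set C : ZMod p := (x 2)⁻¹ with hCdef
  set D : ZMod p := (x 3)⁻¹ with hDdef
  have hA : A ≠ 0 := inv_ne_zero hu
  have hB : B ≠ 0 := inv_ne_zero hv
  have hC : C ≠ 0 := inv_ne_zero (hne 2)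
  have hD : D ≠ 0 := inv_ne_zero (hne 3)
  -- the 10-term character identity
  have hLam : ∀ w : ZMod p,
      χ (A*w) + χ (B*w) + 2*χ ((C+D)*w) + χ ((A+B+C)*w) + χ ((A+B+D)*w)
      = χ (C*w) + χ (D*w) + 2*χ ((A+B)*w) + χ ((A+C+D)*w) + χ ((B+C+D)*w) := by
    intro w
    by_cases hw : w = 0
    · simp [hw]
    · have e2 := key2 (x 2) (hne 2) w hw
      have e3 := key2 (x 3) (hne 3) w hw
      have eu := key2 u hu w hw
      have ev := key2 v hv w hw
      have hsum : (∑ c : ZMod p, (((c * x 2).val : ℂ) * χ (c * w)))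
            + (∑ c : ZMod p, (((c * x 3).val : ℂ) * χ (c * w)))
          = (∑ c : ZMod p, (((c * u).val : ℂ) * χ (c * w)))
            + (∑ c : ZMod p, (((c * v).val : ℂ) * χ (c * w))) := by
        rw [← Finset.sum_add_distrib, ← Finset.sum_add_distrib]
        apply Finset.sum_congr rfl
        intro c _
        have h1 := hval c
        have h2 : (((c * x 2).val : ℂ) + ((c * x 3).val : ℂ))
            = (((c * u).val : ℂ) + ((c * v).val : ℂ)) := by exact_mod_cast congrArg (Nat.cast : ℕ → ℂ) h1
        linear_combination χ (c * w) * h2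
      rw [e2, e3, eu, ev] at hsum
      -- now a rational identity
      set a : ℂ := χ (A * w) with hadef
      set b : ℂ := χ (B * w) with hbdef
      set cc : ℂ := χ (C * w) with hccdef
      set d : ℂ := χ (D * w) with hddef
      have hane : a - 1 ≠ 0 := sub_ne_zero.mpr (hχ1 _ (mul_ne_zero hA hw))
      have hbne : b - 1 ≠ 0 := sub_ne_zero.mpr (hχ1 _ (mul_ne_zero hB hw))
      have hcne : cc - 1 ≠ 0 := sub_ne_zero.mpr (hχ1 _ (mul_ne_zero hC hw))
      have hdne : d - 1 ≠ 0 := sub_ne_zero.mpr (hχ1 _ (mul_ne_zero hD hw))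
      have hmul : ∀ E F : ZMod p, χ ((E + F) * w) = χ (E * w) * χ (F * w) := by
        intro E F
        rw [add_mul, AddChar.map_add_eq_mul]
      have hABC : χ ((A+B+C)*w) = a * b * cc := by rw [hmul (A+B) C, hmul A B]
      have hABD : χ ((A+B+D)*w) = a * b * d := by rw [hmul (A+B) D, hmul A B]
      have hACD : χ ((A+C+D)*w) = a * cc * d := by rw [hmul (A+C) D, hmul A C]
      have hBCD : χ ((B+C+D)*w) = b * cc * d := by rw [hmul (B+C) D, hmul B C]
      have hCD : χ ((C+D)*w) = cc * d := hmul C D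
      have hAB : χ ((A+B)*w) = a * b := hmul A B
      rw [hABC, hABD, hACD, hBCD, hCD, hAB]
      -- from hsum : p/(cc-1) + p/(d-1) = p/(a-1) + p/(b-1)
      have hpoly : (p:ℂ) * ((a-1)*(b-1)*(d-1) + (a-1)*(b-1)*(cc-1))
          = (p:ℂ) * ((b-1)*(cc-1)*(d-1) + (a-1)*(cc-1)*(d-1)) := by
        field_simp at hsum
        linear_combination (p:ℂ) * hsum
      have hpoly2 : (a-1)*(b-1)*(d-1) + (a-1)*(b-1)*(cc-1)
          = (b-1)*(cc-1)*(d-1) + (a-1)*(cc-1)*(d-1) := mul_left_cancel₀ hpC hpoly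
      linear_combination hpoly2
  -- orthogonality: summing against χ(-(z*w))
  have hw_orth : ∀ E z : ZMod p,
      ∑ w : ZMod p, χ (E * w) * χ (-(z * w)) = (p:ℂ) * (if E = z then 1 else 0) := by
    intro E z
    have h1 : ∀ w : ZMod p, χ (E * w) * χ (-(z * w)) = χ ((E - z) * w) := by
      intro w
      rw [← AddChar.map_add_eq_mul]
      congr 1
      ring
    rw [Finset.sum_congr rfl (fun w _ => h1 w)]
    by_cases hEz : E = z
    · rw [if_pos hEz, hEz, sub_self]
      simp [ZMod.card, zero_mul, mul_one]
    · rw [if_neg hEz, hsumy _ (sub_ne_zero.mpr hEz), mul_zero]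
  -- the counting identity
  have hcount : ∀ z : ZMod p,
      ((if A = z then (1:ℂ) else 0) + (if B = z then 1 else 0) + 2*(if C+D = z then 1 else 0)
        + (if A+B+C = z then 1 else 0) + (if A+B+D = z then 1 else 0))
      = ((if C = z then 1 else 0) + (if D = z then 1 else 0) + 2*(if A+B = z then 1 else 0)
        + (if A+C+D = z then 1 else 0) + (if B+C+D = z then 1 else 0)) := by
    intro z
    have hsumid : ∑ w : ZMod p,
        ((χ (A*w) + χ (B*w) + 2*χ ((C+D)*w) + χ ((A+B+C)*w) + χ ((A+B+D)*w)) * χ (-(z*w)))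
        = ∑ w : ZMod p,
        ((χ (C*w) + χ (D*w) + 2*χ ((A+B)*w) + χ ((A+C+D)*w) + χ ((B+C+D)*w)) * χ (-(z*w))) :=
      Finset.sum_congr rfl (fun w _ => by rw [hLam w])
    have expand : ∀ (E1 E2 E3 E4 E5 : ZMod p),
        ∑ w : ZMod p,
          ((χ (E1*w) + χ (E2*w) + 2*χ (E3*w) + χ (E4*w) + χ (E5*w)) * χ (-(z*w)))
        = (p:ℂ) * ((if E1 = z then 1 else 0) + (if E2 = z then 1 else 0)
            + 2*(if E3 = z then 1 else 0) + (if E4 = z then 1 else 0)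
            + (if E5 = z then 1 else 0)) := by
      intro E1 E2 E3 E4 E5
      have h2 : ∀ w : ZMod p,
          ((χ (E1*w) + χ (E2*w) + 2*χ (E3*w) + χ (E4*w) + χ (E5*w)) * χ (-(z*w)))
          = χ (E1*w) * χ (-(z*w)) + χ (E2*w) * χ (-(z*w)) + 2*(χ (E3*w) * χ (-(z*w)))
            + χ (E4*w) * χ (-(z*w)) + χ (E5*w) * χ (-(z*w)) := by intro w; ring
      rw [Finset.sum_congr rfl (fun w _ => h2 w)]
      rw [Finset.sum_add_distrib, Finset.sum_add_distrib, Finset.sum_add_distrib,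
        Finset.sum_add_distrib, ← Finset.mul_sum]
      rw [hw_orth E1 z, hw_orth E2 z, hw_orth E3 z, hw_orth E4 z, hw_orth E5 z]
      ring
    rw [expand A B (C+D) (A+B+C) (A+B+D), expand C D (A+B) (A+C+D) (B+C+D)] at hsumid
    exact mul_left_cancel₀ hpC hsumid
  -- consequences of minimality for A B C D
  have hCA : C ≠ A := by
    intro h
    have : x 2 = u := inv_injective h
    rw [hudef] at this
    exact hpair 0 2 (by decide) (by rw [this]; ring)
  have hDA : D ≠ A := by
    intro h
    have : x 3 = u := inv_injective h
    rw [hudef] at this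
    exact hpair 0 3 (by decide) (by rw [this]; ring)
  have hCB : C ≠ B := by
    intro h
    have : x 2 = v := inv_injective h
    rw [hvdef] at this
    exact hpair 1 2 (by decide) (by rw [this]; ring)
  have hDB : D ≠ B := by
    intro h
    have : x 3 = v := inv_injective h
    rw [hvdef] at this
    exact hpair 1 3 (by decide) (by rw [this]; ring)
  have hCDne : C + D ≠ 0 := by
    intro h
    have h1 : C = -D := by linear_combination h
    have h2 : x 2 = -(x 3) := by
      have : (x 2)⁻¹ = (-(x 3))⁻¹ := by rw [← inv_neg] at h1; exact h1
      exact inv_injective this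
    exact hpair 2 3 (by decide) (by rw [h2]; ring)
  -- endgame: derive B + C + D = A and A + C + D = B
  have hzA := hcount A
  have hzB := hcount B
  have hite : ∀ (P : Prop) (_ : Decidable P), (if P then (1:ℂ) else 0) = 0 ∨ (if P then (1:ℂ) else 0) = 1 := by
    intro P inst
    split <;> simp
  have hBCDA : B + C + D = A := by
    by_contra hn
    rw [if_neg hCA, if_neg hDA, if_neg hn] at hzA
    have hABA : A + B ≠ A := by
      intro h
      exact hB (by linear_combination h)
    have hACDA : A + C + D ≠ A := by
      intro h
      exact hCDne (by linear_combination h)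
    rw [if_neg hABA, if_neg hACDA, if_pos rfl] at hzA
    rcases hite (B = A) inferInstance with h2 | h2 <;>
      rcases hite (C + D = A) inferInstance with h3 | h3 <;>
      rcases hite (A + B + C = A) inferInstance with h4 | h4 <;>
      rcases hite (A + B + D = A) inferInstance with h5 | h5 <;>
      rw [h2, h3, h4, h5] at hzA <;> norm_num at hzA
  have hACDB : A + C + D = B := by
    by_contra hn
    rw [if_neg hCB, if_neg hDB, if_neg hn] at hzB
    have hABB : A + B ≠ B := by
      intro h
      exact hA (by linear_combination h)
    have hBCDB : B + C + D ≠ B := by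
      intro h
      exact hCDne (by linear_combination h)
    rw [if_neg hABB, if_neg hBCDB, if_pos rfl] at hzB
    rcases hite (A = B) inferInstance with h2 | h2 <;>
      rcases hite (C + D = B) inferInstance with h3 | h3 <;>
      rcases hite (A + B + C = B) inferInstance with h4 | h4 <;>
      rcases hite (A + B + D = B) inferInstance with h5 | h5 <;>
      rw [h2, h3, h4, h5] at hzB <;> norm_num at hzB
  -- contradiction
  have h2AB : (2 : ZMod p) * (A - B) = 0 := by linear_combination hACDB - hBCDA
  have h2ne : (2 : ZMod p) ≠ 0 := by
    intro h
    have : ((2 : ℕ) : ZMod p) = 0 := by exact_mod_cast h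
    have hdvd := (ZMod.natCast_eq_zero_iff 2 p).mp this
    have := Nat.le_of_dvd (by norm_num) hdvd
    omega
  have hAB : A = B := by
    rcases mul_eq_zero.mp h2AB with h | h
    · exact absurd h h2ne
    · exact sub_eq_zero.mp h
  exact hCDne (by linear_combination hBCDA + hAB)

end IndexAux

/-- If `G` is cyclic of prime order `p` with `gcd(p, 6) = 1`, then every minimal
zero-sum sequence of length 4 over `G` has index 1. -/
theorem index_conjecture_prime (p : ℕ) (hp : p.Prime) (h6 : Nat.gcd p 6 = 1)
    (x : Fin 4 → ZMod p) (hx : IsMinZeroSum4 p x) :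
    seqIndex p x = 1 := by
  haveI := Fact.mk hp
  haveI : NeZero p := ⟨hp.ne_zero⟩
  have hp2 : p ≠ 2 := by
    intro h
    rw [h] at h6
    exact absurd h6 (by decide)
  have hppos : 0 < p := hp.pos
  have hpR : (0:ℝ) < (p:ℝ) := by exact_mod_cast hppos
  obtain ⟨hzero, hmin⟩ := hx
  have hne : ∀ i, x i ≠ 0 := by
    intro i h
    refine hmin {i} (by simp) ?_ (by rwa [Finset.sum_singleton])
    intro hT
    have := congrArg Finset.card hT
    simp at this
  have hpair : ∀ i j, i ≠ j → x i + x j ≠ 0 := by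
    intro i j hij h
    refine hmin {i, j} (by simp) ?_ (by rwa [Finset.sum_pair hij])
    intro hT
    have := congrArg Finset.card hT
    rw [Finset.card_pair hij] at this
    simp at this
  obtain ⟨c, hc0, hcS⟩ := IndexAux.exists_good hp hp2 x hzero hne hpair
  set g : ZMod p := c⁻¹ with hgdef
  have hg0 : g ≠ 0 := inv_ne_zero hc0
  have hgen : IsAddGenerator p g := IndexAux.isAddGenerator_of_ne_zero hp hg0
  have hginv : g⁻¹ = c := inv_inv c
  have hnorm : gNorm p g x = 1 := by
    rw [gNorm]
    have hterm : ∀ i : Fin 4, rep p (g⁻¹ * x i) = (c * x i).val := by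
      intro i
      rw [hginv, rep, if_neg (mul_ne_zero hc0 (hne i))]
    rw [Finset.sum_congr rfl (fun i _ => by rw [hterm i])]
    rw [← Nat.cast_sum, hcS]
    exact div_self hpR.ne'
  have hlb : ∀ r ∈ {r : ℝ | ∃ g : ZMod p, IsAddGenerator p g ∧ r = gNorm p g x}, (1:ℝ) ≤ r := by
    rintro r ⟨g', hgen', rfl⟩
    have hg' : g' ≠ 0 := IndexAux.ne_zero_of_isAddGenerator hp hgen'
    have hg'i : g'⁻¹ ≠ 0 := inv_ne_zero hg'
    have hterm : ∀ i : Fin 4, rep p (g'⁻¹ * x i) = (g'⁻¹ * x i).val := by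
      intro i
      rw [rep, if_neg (mul_ne_zero hg'i (hne i))]
    rw [gNorm, Finset.sum_congr rfl (fun i _ => by rw [hterm i]), ← Nat.cast_sum]
    have hdvd : p ∣ ∑ i, (g'⁻¹ * x i).val := by
      have : ((∑ i, (g'⁻¹ * x i).val : ℕ) : ZMod p) = 0 := by
        push_cast
        simp only [ZMod.natCast_val, ZMod.cast_id]
        rw [← Finset.mul_sum, hzero, mul_zero]
      exact (ZMod.natCast_eq_zero_iff _ _).mp this
    have hpos : 0 < ∑ i, (g'⁻¹ * x i).val := by
      have h1 : 1 ≤ (g'⁻¹ * x 0).val := by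
        rcases Nat.eq_zero_or_pos (g'⁻¹ * x 0).val with h | h
        · exact absurd ((ZMod.val_eq_zero _).mp h) (mul_ne_zero hg'i (hne 0))
        · exact h
      calc 0 < (g'⁻¹ * x 0).val := h1
        _ ≤ _ := Finset.single_le_sum (f := fun i => (g'⁻¹ * x i).val)
            (fun i _ => Nat.zero_le _) (Finset.mem_univ 0)
    have hple : p ≤ ∑ i, (g'⁻¹ * x i).val := Nat.le_of_dvd hpos hdvd
    rw [le_div_iff₀ hpR, one_mul]
    exact_mod_cast hple
  have hmem : (1:ℝ) ∈ {r : ℝ | ∃ g : ZMod p, IsAddGenerator p g ∧ r = gNorm p g x} :=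
    ⟨g, hgen, hnorm.symm⟩
  rw [seqIndex]
  apply le_antisymm
  · exact csInf_le ⟨1, fun r hr => hlb r hr⟩ hmem
  · exact le_csInf ⟨1, hmem⟩ hlb
end
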